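/- arXiv:0810.1381 — 7 statements merged into one kernel-verified Lean document; each statement's English description precedes it below -/
import Mathlib

section
/- Let p < 3 and let L ∈ L²(ℝ₊, x^p dx). Then there exists a unique H ∈ L²(ℝ₊, x^p dx) such that 4 H(2x) − H(x) = L(x) for a.e. x > 0. -/
open MeasureTheory Set Filter
open scoped ENNReal Topology

namespace DilationEqAux

lemma rpow2 (y : ℝ≥0∞) : y ^ (2:ℝ) = y ^ (2:ℕ) := by
  rw [show (2:ℝ) = ((2:ℕ):ℝ) by norm_num, ENNReal.rpow_natCast]

lemma root_sq (u : ℝ≥0∞) : (u ^ (1/2:ℝ)) ^ (2:ℕ) = u := by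
  rw [← rpow2, ← ENNReal.rpow_mul]
  norm_num

lemma lintegral_Ioi_comp_mul (c : ℝ) (hc : 0 < c) (g : ℝ → ℝ≥0∞) :
    ∫⁻ x in Ioi (0:ℝ), g (c * x) = ENNReal.ofReal c⁻¹ * ∫⁻ y in Ioi (0:ℝ), g y := by
  have h1 : ∀ (f : ℝ → ℝ≥0∞), ∫⁻ x, f (c * x) = ENNReal.ofReal c⁻¹ * ∫⁻ y, f y := by
    intro f
    let e : ℝ ≃ᵐ ℝ := (Homeomorph.mulLeft₀ c hc.ne').toMeasurableEquiv
    have hmap : Measure.map (⇑e) volume = ENNReal.ofReal c⁻¹ • volume := by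
      have he : (⇑e) = (c * ·) := rfl
      rw [he, Real.map_volume_mul_left hc.ne', abs_of_pos (inv_pos.mpr hc)]
    calc ∫⁻ x, f (c * x) = ∫⁻ x, f (e x) := rfl
    _ = ∫⁻ y, f y ∂(Measure.map e volume) := (lintegral_map_equiv f e).symm
    _ = _ := by rw [hmap, lintegral_smul_measure, smul_eq_mul]
  rw [← lintegral_indicator measurableSet_Ioi, ← lintegral_indicator measurableSet_Ioi]
  have hind : ∀ x, (Ioi (0:ℝ)).indicator (fun x => g (c*x)) x
      = ((Ioi (0:ℝ)).indicator g) (c * x) := by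
    intro x
    by_cases hx : x ∈ Ioi (0:ℝ)
    · rw [indicator_of_mem hx, indicator_of_mem (mem_Ioi.mpr (mul_pos hc hx))]
    · rw [indicator_of_notMem hx, indicator_of_notMem]
      intro hcx
      exact hx (mem_Ioi.mpr (by nlinarith [mem_Ioi.mp hcx]))
  simp_rw [hind]
  exact h1 _

lemma weighted_scale (p : ℝ) (c : ℝ) (hc : 0 < c) (F : ℝ → ℝ≥0∞) :
    ∫⁻ x in Ioi (0:ℝ), F (c * x) * ENNReal.ofReal (x ^ p) =
      ENNReal.ofReal (c⁻¹ * (c ^ p)⁻¹) * ∫⁻ y in Ioi (0:ℝ), F y * ENNReal.ofReal (y ^ p) := by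
  have key := lintegral_Ioi_comp_mul c hc (fun y => F y * ENNReal.ofReal ((y / c) ^ p))
  have h1 : ∫⁻ x in Ioi (0:ℝ), F (c * x) * ENNReal.ofReal (x ^ p)
      = ∫⁻ x in Ioi (0:ℝ), F (c * x) * ENNReal.ofReal (((c * x) / c) ^ p) := by
    apply lintegral_congr
    intro x
    rw [mul_comm c x, mul_div_assoc, div_self hc.ne', mul_one]
  rw [h1, key]
  have h2 : ∫⁻ y in Ioi (0:ℝ), F y * ENNReal.ofReal ((y / c) ^ p)
      = ∫⁻ y in Ioi (0:ℝ), (F y * ENNReal.ofReal (y ^ p)) * ENNReal.ofReal ((c ^ p)⁻¹) := by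
    apply lintegral_congr_ae
    filter_upwards [ae_restrict_mem measurableSet_Ioi] with y hy
    rw [Real.div_rpow (le_of_lt hy) hc.le, div_eq_mul_inv,
      ENNReal.ofReal_mul (Real.rpow_nonneg (le_of_lt hy) p), mul_assoc]
  rw [h2, lintegral_mul_const' _ _ ENNReal.ofReal_ne_top,
    ENNReal.ofReal_mul (inv_nonneg.mpr hc.le)]
  ring

lemma ae_comp_mul (c : ℝ) (hc : 0 < c) {P : ℝ → Prop}
    (h : ∀ᵐ x ∂(volume.restrict (Ioi (0:ℝ))), P x) :
    ∀ᵐ x ∂(volume.restrict (Ioi (0:ℝ))), P (c * x) := by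
  rw [ae_iff] at h ⊢
  rw [Measure.restrict_apply' measurableSet_Ioi] at h ⊢
  obtain ⟨T, hTsub, hTm, hT0⟩ := exists_measurable_superset_of_null h
  refine measure_mono_null (fun x hx => ?_) (?_ : volume ((c * ·) ⁻¹' T) = 0)
  · exact hTsub ⟨hx.1, mem_Ioi.mpr (mul_pos hc (mem_Ioi.mp hx.2))⟩
  · rw [Real.volume_preimage_mul_left hc.ne', hT0, mul_zero]

lemma finite_sq_weight {p : ℝ} {G : ℝ → ℝ} (h : IntegrableOn (fun x => G x ^ 2 * x ^ p) (Ioi 0)) :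
    ∫⁻ x in Ioi (0:ℝ), ENNReal.ofReal (G x ^ 2) * ENNReal.ofReal (x ^ p) < ∞ := by
  refine lt_of_le_of_lt (lintegral_mono_ae ?_) h.2
  filter_upwards [ae_restrict_mem measurableSet_Ioi] with x hx
  rw [← ENNReal.ofReal_mul (sq_nonneg _)]
  exact Real.ofReal_le_enorm _

lemma iSup_sq {a : ℕ → ℝ≥0∞} (ha : Monotone a) : (⨆ n, a n) ^ (2:ℕ) = ⨆ n, a n ^ (2:ℕ) := by
  apply le_antisymm
  · rw [pow_two, ENNReal.iSup_mul]
    refine iSup_le fun n => ?_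
    rw [ENNReal.mul_iSup]
    refine iSup_le fun m => ?_
    calc a n * a m ≤ a (max n m) * a (max n m) :=
          mul_le_mul' (ha (le_max_left n m)) (ha (le_max_right n m))
    _ = a (max n m) ^ (2:ℕ) := (pow_two _).symm
    _ ≤ ⨆ k, a k ^ (2:ℕ) := le_iSup (fun k => a k ^ (2:ℕ)) _
  · exact iSup_le fun n => pow_le_pow_left' (le_iSup a n) 2

end DilationEqAux

open DilationEqAux

/-- For `p < 3` and `L ∈ L²(ℝ₊, xᵖ dx)`, there is a unique `H ∈ L²(ℝ₊, xᵖ dx)` with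
`4 H(2x) − H(x) = L(x)` for a.e. `x > 0`. -/
theorem unique_solution_dilation_eq_of_lt_three (p : ℝ) (hp : p < 3) (L : ℝ → ℝ)
    (hLmeas : AEMeasurable L (volume.restrict (Ioi 0)))
    (hL : IntegrableOn (fun x => (L x) ^ 2 * x ^ p) (Ioi 0)) :
    ∃ H : ℝ → ℝ, (AEMeasurable H (volume.restrict (Ioi 0)) ∧
      IntegrableOn (fun x => (H x) ^ 2 * x ^ p) (Ioi 0) ∧
      (∀ᵐ x ∂(volume.restrict (Ioi (0 : ℝ))), 4 * H (2 * x) - H x = L x)) ∧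
      (∀ H' : ℝ → ℝ, AEMeasurable H' (volume.restrict (Ioi 0)) →
        IntegrableOn (fun x => (H' x) ^ 2 * x ^ p) (Ioi 0) →
        (∀ᵐ x ∂(volume.restrict (Ioi (0 : ℝ))), 4 * H' (2 * x) - H' x = L x) →
        H' =ᵐ[volume.restrict (Ioi (0 : ℝ))] H) := by
  set ν := volume.restrict (Ioi (0:ℝ)) with hν
  obtain ⟨L₀, hL₀m, hLL₀⟩ : ∃ L₀ : ℝ → ℝ, Measurable L₀ ∧ L =ᵐ[ν] L₀ :=
    ⟨hLmeas.mk L, hLmeas.measurable_mk, hLmeas.ae_eq_mk⟩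
  have hL₀int : IntegrableOn (fun x => L₀ x ^ 2 * x ^ p) (Ioi 0) := by
    refine (integrable_congr ?_).mp hL
    filter_upwards [hLL₀] with x hx
    rw [hx]
  set w : ℝ → ℝ≥0∞ := fun x => ENNReal.ofReal (x ^ p) with hwdef
  have hwm : Measurable w := ENNReal.measurable_ofReal.comp (measurable_id.pow measurable_const)
  have hIL : ∫⁻ x in Ioi (0:ℝ), ENNReal.ofReal (L₀ x ^ 2) * w x < ∞ := finite_sq_weight hL₀int
  set IL := ∫⁻ x in Ioi (0:ℝ), ENNReal.ofReal (L₀ x ^ 2) * w x with hILdef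
  set sw : ℝ → ℝ≥0∞ := fun x => w x ^ (1/2:ℝ) with hswdef
  have hswm : Measurable sw := hwm.pow measurable_const
  have hsw_sq : ∀ x, sw x ^ (2:ℕ) = w x := fun x => root_sq (w x)
  set a : ℕ → ℝ → ℝ≥0∞ :=
    fun n x => ENNReal.ofReal ((4:ℝ)⁻¹ ^ (n+1) * |L₀ (x / 2 ^ (n+1))|) with hadef
  have ham : ∀ n, Measurable (a n) := fun n =>
    ENNReal.measurable_ofReal.comp
      (measurable_const.mul ((hL₀m.comp (measurable_id.div_const _)).abs))
  set b : ℕ → ℝ → ℝ≥0∞ := fun n x => a n x * sw x with hbdef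
  have hbm : ∀ n, Measurable (b n) := fun n => (ham n).mul hswm
  set S : ℕ → ℝ → ℝ≥0∞ := fun N x => ∑ n ∈ Finset.range N, b n x with hSdef
  have hSm : ∀ N, Measurable (S N) := fun N => Finset.measurable_sum _ (fun n _ => hbm n)
  have hSmono : ∀ x, Monotone (fun N => S N x) := fun x M N h =>
    Finset.sum_le_sum_of_subset (Finset.range_subset_range.mpr h)
  set T : ℝ → ℝ≥0∞ := fun x => ∑' n, b n x with hTdef
  have hTm : Measurable T := Measurable.ennreal_tsum hbm
  have hTsup : ∀ x, T x = ⨆ N, S N x := fun x => ENNReal.tsum_eq_iSup_nat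
  set A := ∫⁻ x, T x ^ (2:ℕ) ∂ν with hAdef
  have hA_sup : A = ⨆ N, ∫⁻ x, S N x ^ (2:ℕ) ∂ν := by
    rw [hAdef, ← lintegral_iSup (fun N => (hSm N).pow_const 2)
      (fun M N h x => pow_le_pow_left' (hSmono x h) 2)]
    apply lintegral_congr
    intro x
    rw [hTsup x, iSup_sq (hSmono x)]
  -- Minkowski bound on partial sums
  have hMinkR : ∀ N, (∫⁻ x, S N x ^ (2:ℝ) ∂ν) ^ (1/2:ℝ)
      ≤ ∑ n ∈ Finset.range N, (∫⁻ x, b n x ^ (2:ℝ) ∂ν) ^ (1/2:ℝ) := by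
    intro N
    induction N with
    | zero =>
      have h0 : ∀ x, S 0 x = 0 := fun x => by simp [hSdef]
      simp [h0, ENNReal.zero_rpow_of_pos]
    | succ N ih =>
      have key := ENNReal.lintegral_Lp_add_le (μ := ν) (f := S N) (g := b N)
        (hSm N).aemeasurable (hbm N).aemeasurable one_le_two
      have hSN : ∀ x, S (N+1) x = (S N + b N) x := by
        intro x
        simp only [hSdef, Pi.add_apply, Finset.sum_range_succ]
      calc (∫⁻ x, S (N+1) x ^ (2:ℝ) ∂ν) ^ (1/2:ℝ)
          = (∫⁻ x, (S N + b N) x ^ (2:ℝ) ∂ν) ^ (1/2:ℝ) := by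
            congr 1
            exact lintegral_congr fun x => by rw [hSN x]
        _ ≤ (∫⁻ x, S N x ^ (2:ℝ) ∂ν) ^ (1/2:ℝ) + (∫⁻ x, b N x ^ (2:ℝ) ∂ν) ^ (1/2:ℝ) := key
        _ ≤ (∑ n ∈ Finset.range N, (∫⁻ x, b n x ^ (2:ℝ) ∂ν) ^ (1/2:ℝ))
            + (∫⁻ x, b N x ^ (2:ℝ) ∂ν) ^ (1/2:ℝ) := add_le_add_left ih _
        _ = _ := (Finset.sum_range_succ _ _).symm
  -- value of the single term integrals
  set q := ENNReal.ofReal ((2:ℝ) ^ (p-3)) with hqdef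
  have hq1 : q < 1 := by
    rw [hqdef, ← ENNReal.ofReal_one]
    exact ENNReal.ofReal_lt_ofReal_iff_of_nonneg (Real.rpow_nonneg (by norm_num) _) |>.mpr
      (Real.rpow_lt_one_of_one_lt_of_neg one_lt_two (by linarith))
  have hb2 : ∀ n, ∫⁻ x, b n x ^ (2:ℕ) ∂ν = q ^ (n+1) * IL := by
    intro n
    have hc : (0:ℝ) < ((2:ℝ) ^ (n+1))⁻¹ := by positivity
    have step1 : ∀ x, b n x ^ (2:ℕ)
        = ENNReal.ofReal ((16:ℝ)⁻¹ ^ (n+1))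
          * (ENNReal.ofReal (L₀ (((2:ℝ) ^ (n+1))⁻¹ * x) ^ 2) * w x) := by
      intro x
      have harg : x / 2 ^ (n+1) = ((2:ℝ) ^ (n+1))⁻¹ * x := div_eq_inv_mul x _
      have hcoef : ((4:ℝ)⁻¹ ^ (n+1)) ^ 2 = (16:ℝ)⁻¹ ^ (n+1) := by
        rw [← pow_mul, mul_comm, pow_mul]; norm_num
      calc b n x ^ (2:ℕ) = a n x ^ (2:ℕ) * w x := by
            rw [hbdef]; simp only; rw [mul_pow, hsw_sq]
      _ = ENNReal.ofReal (((4:ℝ)⁻¹ ^ (n+1) * |L₀ (x / 2 ^ (n+1))|) ^ 2) * w x := by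
            rw [hadef]; simp only; rw [ENNReal.ofReal_pow (by positivity)]
      _ = _ := by
            rw [mul_pow, sq_abs, hcoef, harg, ENNReal.ofReal_mul (by positivity), mul_assoc]
    have step2 : ∫⁻ x, b n x ^ (2:ℕ) ∂ν
        = ENNReal.ofReal ((16:ℝ)⁻¹ ^ (n+1)) *
          (ENNReal.ofReal ((((2:ℝ) ^ (n+1))⁻¹)⁻¹ * ((((2:ℝ) ^ (n+1))⁻¹) ^ p)⁻¹) * IL) := by
      rw [lintegral_congr fun x => step1 x, lintegral_const_mul' _ _ ENNReal.ofReal_ne_top]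
      congr 1
      exact weighted_scale p _ hc (fun y => ENNReal.ofReal (L₀ y ^ 2))
    have hconst : ENNReal.ofReal ((16:ℝ)⁻¹ ^ (n+1))
        * ENNReal.ofReal ((((2:ℝ) ^ (n+1))⁻¹)⁻¹ * ((((2:ℝ) ^ (n+1))⁻¹) ^ p)⁻¹)
        = q ^ (n+1) := by
      rw [← ENNReal.ofReal_mul (by positivity), hqdef,
        ← ENNReal.ofReal_pow (Real.rpow_nonneg (by norm_num) _)]
      congr 1
      rw [inv_inv, Real.inv_rpow (by positivity), inv_inv]
      have h2p : ((2:ℝ) ^ (n+1)) ^ p = ((2:ℝ) ^ p) ^ (n+1) := by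
        rw [← Real.rpow_natCast 2 (n+1), ← Real.rpow_mul (by norm_num), mul_comm,
          Real.rpow_mul (by norm_num), Real.rpow_natCast]
      rw [h2p, Real.rpow_sub (by norm_num : (0:ℝ) < 2),
        show (2:ℝ) ^ (3:ℝ) = 8 by
          rw [show (3:ℝ) = ((3:ℕ):ℝ) by norm_num, Real.rpow_natCast]; norm_num,
        div_pow, ← mul_pow, ← mul_pow]
      congr 1
      ring_nf
      rw [one_div]
    rw [step2, ← mul_assoc, hconst]
  -- finiteness of A
  set r := q ^ (1/2:ℝ) with hrdef
  have hr1 : r < 1 := ENNReal.rpow_lt_one hq1 (by norm_num)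
  have hrne : r ≠ ∞ := by
    rw [hrdef]
    exact (ENNReal.rpow_lt_top_of_nonneg (by norm_num) ENNReal.ofReal_ne_top).ne
  have hroot : ∀ n, (∫⁻ x, b n x ^ (2:ℝ) ∂ν) ^ (1/2:ℝ) = r ^ (n+1) * IL ^ (1/2:ℝ) := by
    intro n
    have heq : ∫⁻ x, b n x ^ (2:ℝ) ∂ν = q ^ (n+1) * IL := by
      rw [← hb2 n]
      exact lintegral_congr fun x => by rw [rpow2]
    rw [heq, ENNReal.mul_rpow_of_nonneg _ _ (by norm_num)]
    congr 1
    rw [hrdef, ← ENNReal.rpow_natCast q (n+1), ← ENNReal.rpow_natCast (q ^ (1/2:ℝ)) (n+1),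
      ← ENNReal.rpow_mul, ← ENNReal.rpow_mul, mul_comm]
  set C := ∑' n:ℕ, r ^ (n+1) * IL ^ (1/2:ℝ) with hCdef
  have hCfin : C ≠ ∞ := by
    rw [hCdef, ENNReal.tsum_mul_right]
    have h1 : (∑' n:ℕ, r ^ (n+1)) = r * ∑' n:ℕ, r ^ n := by
      rw [← ENNReal.tsum_mul_left]
      exact tsum_congr fun n => (pow_succ' r n)
    have h2 : (1 - r)⁻¹ ≠ ∞ := by
      rw [ENNReal.inv_ne_top]
      intro h
      exact absurd (tsub_eq_zero_iff_le.mp h) (not_le.mpr hr1)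
    have h3 : IL ^ (1/2:ℝ) ≠ ∞ := (ENNReal.rpow_lt_top_of_nonneg (by norm_num) hIL.ne).ne
    rw [h1, ENNReal.tsum_geometric]
    exact ENNReal.mul_ne_top (ENNReal.mul_ne_top hrne h2) h3
  have hbndN : ∀ N, ∫⁻ x, S N x ^ (2:ℕ) ∂ν ≤ C ^ (2:ℕ) := by
    intro N
    have h1 : (∫⁻ x, S N x ^ (2:ℝ) ∂ν) ^ (1/2:ℝ) ≤ C := by
      refine le_trans (hMinkR N) ?_
      calc ∑ n ∈ Finset.range N, (∫⁻ x, b n x ^ (2:ℝ) ∂ν) ^ (1/2:ℝ)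
          = ∑ n ∈ Finset.range N, r ^ (n+1) * IL ^ (1/2:ℝ) :=
            Finset.sum_congr rfl fun n _ => hroot n
        _ ≤ C := ENNReal.sum_le_tsum _
    have h2 := pow_le_pow_left' h1 2
    rw [root_sq] at h2
    calc ∫⁻ x, S N x ^ (2:ℕ) ∂ν = ∫⁻ x, S N x ^ (2:ℝ) ∂ν :=
          lintegral_congr fun x => (rpow2 _).symm
      _ ≤ C ^ (2:ℕ) := h2
  have hAfin : A < ∞ := by
    rw [hA_sup]
    exact lt_of_le_of_lt (iSup_le hbndN) (ENNReal.pow_lt_top hCfin.lt_top)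
  -- a.e. summability of the majorant series
  have hae_sum : ∀ᵐ x ∂ν, Summable (fun n => (4:ℝ)⁻¹ ^ (n+1) * |L₀ (x / 2 ^ (n+1))|) := by
    have h1 : ∀ᵐ x ∂ν, T x ^ (2:ℕ) < ∞ := ae_lt_top (hTm.pow_const 2) hAfin.ne
    have h2 : ∀ᵐ x ∂ν, x ∈ Ioi (0:ℝ) := ae_restrict_mem measurableSet_Ioi
    filter_upwards [h1, h2] with x hx hx0
    have hwx0 : w x ≠ 0 := by
      simp only [hwdef]
      exact (ENNReal.ofReal_pos.mpr (Real.rpow_pos_of_pos hx0 p)).ne'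
    have hswx0 : sw x ≠ 0 := by
      show w x ^ (1/2:ℝ) ≠ 0
      intro h
      rcases ENNReal.rpow_eq_zero_iff.mp h with ⟨h0, _⟩ | ⟨_, hn⟩
      · exact hwx0 h0
      · norm_num at hn
    have hTfin : T x ≠ ∞ := by
      intro h
      have htop : (⊤:ℝ≥0∞) ^ (2:ℕ) = ⊤ := by
        rw [ENNReal.top_pow]
        norm_num
      rw [h, htop] at hx
      exact lt_irrefl _ hx
    have hta : (∑' n, a n x) ≠ ∞ := by
      intro hcon
      apply hTfin
      have htx : T x = (∑' n, a n x) * sw x := by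
        simp only [hTdef, hbdef]
        exact ENNReal.tsum_mul_right
      rw [htx, hcon, ENNReal.top_mul hswx0]
    have hsumm := ENNReal.summable_toReal hta
    refine hsumm.congr fun n => ?_
    simp only [hadef]
    exact ENNReal.toReal_ofReal (by positivity)
  -- definition of H
  set t : ℕ → ℝ → ℝ := fun n x => (4:ℝ)⁻¹ ^ (n+1) * L₀ (x / 2 ^ (n+1)) with htdef
  set H : ℝ → ℝ := fun x => ∑' n, t n x with hHdef
  have htm : ∀ n, Measurable (t n) := fun n =>
    measurable_const.mul (hL₀m.comp (measurable_id.div_const _))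
  have habs_eq : ∀ n x, (4:ℝ)⁻¹ ^ (n+1) * |L₀ (x / 2 ^ (n+1))| = |t n x| := by
    intro n x
    simp only [htdef]
    rw [abs_mul, abs_of_nonneg (by positivity : (0:ℝ) ≤ (4:ℝ)⁻¹ ^ (n+1))]
  have hae_sum' : ∀ᵐ x ∂ν, Summable (fun n => t n x) := by
    filter_upwards [hae_sum] with x hx
    exact Summable.of_abs (hx.congr fun n => habs_eq n x)
  have hHmeas : AEMeasurable H ν := by
    apply aemeasurable_of_tendsto_metrizable_ae'
      (f := fun N x => ∑ n ∈ Finset.range N, t n x)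
      (fun N => (Finset.measurable_sum _ fun n _ => htm n).aemeasurable)
    filter_upwards [hae_sum'] with x hx
    exact hx.hasSum.tendsto_sum_nat
  -- pointwise bound
  have hHbound : ∀ᵐ x ∂ν, ENNReal.ofReal (H x ^ 2) * w x ≤ T x ^ (2:ℕ) := by
    filter_upwards [hae_sum] with x hx
    have hs : Summable fun n => |t n x| := hx.congr fun n => habs_eq n x
    have habs : |H x| ≤ ∑' n, (4:ℝ)⁻¹ ^ (n+1) * |L₀ (x / 2 ^ (n+1))| := by
      have h1 : ‖∑' n, t n x‖ ≤ ∑' n, ‖t n x‖ := norm_tsum_le_tsum_norm (by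
        simpa only [Real.norm_eq_abs] using hs)
      simp only [Real.norm_eq_abs] at h1
      calc |H x| = |∑' n, t n x| := by rw [hHdef]
        _ ≤ ∑' n, |t n x| := h1
        _ = _ := (tsum_congr fun n => (habs_eq n x)).symm
    have hM0 : (0:ℝ) ≤ ∑' n, (4:ℝ)⁻¹ ^ (n+1) * |L₀ (x / 2 ^ (n+1))| :=
      tsum_nonneg fun n => by positivity
    have hsq : H x ^ 2 ≤ (∑' n, (4:ℝ)⁻¹ ^ (n+1) * |L₀ (x / 2 ^ (n+1))|) ^ 2 := by
      rw [← sq_abs]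
      exact pow_le_pow_left₀ (abs_nonneg _) habs 2
    have hof : ENNReal.ofReal ((∑' n, (4:ℝ)⁻¹ ^ (n+1) * |L₀ (x / 2 ^ (n+1))|) ^ 2)
        = (∑' n, a n x) ^ (2:ℕ) := by
      rw [ENNReal.ofReal_pow hM0,
        ENNReal.ofReal_tsum_of_nonneg (fun n => by positivity) (hx.congr fun n => rfl)]
    have hTx : T x ^ (2:ℕ) = (∑' n, a n x) ^ (2:ℕ) * w x := by
      have htx : T x = (∑' n, a n x) * sw x := by
        simp only [hTdef, hbdef]
        exact ENNReal.tsum_mul_right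
      rw [htx, mul_pow, hsw_sq]
    calc ENNReal.ofReal (H x ^ 2) * w x
        ≤ ENNReal.ofReal ((∑' n, (4:ℝ)⁻¹ ^ (n+1) * |L₀ (x / 2 ^ (n+1))|) ^ 2) * w x :=
          mul_le_mul_left (ENNReal.ofReal_le_ofReal hsq) _
      _ = (∑' n, a n x) ^ (2:ℕ) * w x := by rw [hof]
      _ = T x ^ (2:ℕ) := hTx.symm
  -- integrability of H
  have hHint : IntegrableOn (fun x => H x ^ 2 * x ^ p) (Ioi 0) := by
    constructor
    · exact ((hHmeas.pow_const 2).mul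
        ((measurable_id.pow measurable_const).aemeasurable)).aestronglyMeasurable
    · refine lt_of_le_of_lt (lintegral_mono_ae ?_) hAfin
      filter_upwards [hHbound, ae_restrict_mem measurableSet_Ioi] with x hx hx0
      calc (‖H x ^ 2 * x ^ p‖₊ : ℝ≥0∞) = ENNReal.ofReal (H x ^ 2 * x ^ p) := by
            rw [← enorm_eq_nnnorm, Real.enorm_eq_ofReal
              (mul_nonneg (sq_nonneg _) (Real.rpow_nonneg (le_of_lt hx0) p))]
        _ = ENNReal.ofReal (H x ^ 2) * w x := by rw [ENNReal.ofReal_mul (sq_nonneg _)]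
        _ ≤ T x ^ (2:ℕ) := hx
  -- functional equation
  have h4c : ∀ m:ℕ, (4:ℝ) * 4⁻¹ ^ (m+1) = 4⁻¹ ^ m := by
    intro m
    rw [pow_succ', ← mul_assoc]
    norm_num
  have heq : ∀ᵐ x ∂ν, 4 * H (2 * x) - H x = L x := by
    have h2 := ae_comp_mul 2 two_pos hae_sum'
    filter_upwards [hae_sum', h2, hLL₀] with x hx h2x hLx
    have e1 : ∀ n:ℕ, (2*x) / 2 ^ (n+1) = x / 2 ^ n := by
      intro n
      rw [pow_succ']
      exact mul_div_mul_left x _ two_ne_zero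
    have hH2 : H (2*x) = ∑' n, (4:ℝ)⁻¹ ^ (n+1) * L₀ (x / 2 ^ n) := by
      simp only [hHdef, htdef]
      exact tsum_congr fun n => by rw [e1 n]
    have hsum2 : Summable (fun n => (4:ℝ)⁻¹ ^ (n+1) * L₀ (x / 2 ^ n)) := by
      refine h2x.congr fun n => ?_
      simp only [htdef]
      rw [e1 n]
    have hg : Summable (fun n => (4:ℝ)⁻¹ ^ n * L₀ (x / 2 ^ n)) := by
      refine (hsum2.mul_left 4).congr fun n => ?_
      rw [← mul_assoc, h4c n]
    have key : 4 * H (2*x) = L₀ x + H x := by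
      rw [hH2, ← tsum_mul_left]
      have hfe : (fun n => (4:ℝ) * ((4:ℝ)⁻¹ ^ (n+1) * L₀ (x / 2 ^ n)))
          = fun n => (4:ℝ)⁻¹ ^ n * L₀ (x / 2 ^ n) :=
        funext fun n => by rw [← mul_assoc, h4c n]
      rw [hfe, Summable.tsum_eq_zero_add hg]
      congr 1
      simp
    rw [key, hLx]
    ring
  refine ⟨H, ⟨hHmeas, hHint, heq⟩, ?_⟩
  -- uniqueness
  intro H' hH'm hH'int hH'eq
  obtain ⟨G, hGm, hH'G⟩ : ∃ G : ℝ → ℝ, Measurable G ∧ H' =ᵐ[ν] G :=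
    ⟨hH'm.mk H', hH'm.measurable_mk, hH'm.ae_eq_mk⟩
  obtain ⟨K, hKm, hHK⟩ : ∃ K : ℝ → ℝ, Measurable K ∧ H =ᵐ[ν] K :=
    ⟨hHmeas.mk H, hHmeas.measurable_mk, hHmeas.ae_eq_mk⟩
  set D : ℝ → ℝ := fun x => G x - K x with hDdef
  have hDm : Measurable D := hGm.sub hKm
  have hDeq : ∀ᵐ x ∂ν, D x = 4 * D (2*x) := by
    filter_upwards [hH'eq, heq, hH'G, hHK, ae_comp_mul 2 two_pos hH'G,
      ae_comp_mul 2 two_pos hHK] with x e1 e2 e3 e4 e5 e6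
    simp only [hDdef]
    rw [← e3, ← e4, ← e5, ← e6]
    linarith [e1, e2]
  have hGfin : ∫⁻ x in Ioi (0:ℝ), ENNReal.ofReal (G x ^ 2) * ENNReal.ofReal (x ^ p) < ∞ := by
    apply finite_sq_weight
    refine (integrable_congr ?_).mp hH'int
    filter_upwards [hH'G] with x hx
    rw [hx]
  have hKfin : ∫⁻ x in Ioi (0:ℝ), ENNReal.ofReal (K x ^ 2) * ENNReal.ofReal (x ^ p) < ∞ := by
    apply finite_sq_weight
    refine (integrable_congr ?_).mp hHint
    filter_upwards [hHK] with x hx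
    rw [hx]
  set ID := ∫⁻ x in Ioi (0:ℝ), ENNReal.ofReal (D x ^ 2) * ENNReal.ofReal (x ^ p) with hIDdef
  have hwm' : Measurable fun x:ℝ => ENNReal.ofReal (x ^ p) :=
    ENNReal.measurable_ofReal.comp (measurable_id.pow measurable_const)
  have hIDfin : ID < ∞ := by
    have hb : ∀ x, ENNReal.ofReal (D x ^ 2) * ENNReal.ofReal (x ^ p)
        ≤ 2 * (ENNReal.ofReal (G x ^ 2) * ENNReal.ofReal (x ^ p))
          + 2 * (ENNReal.ofReal (K x ^ 2) * ENNReal.ofReal (x ^ p)) := by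
      intro x
      have h1 : D x ^ 2 ≤ 2 * G x ^ 2 + 2 * K x ^ 2 := by
        simp only [hDdef]
        nlinarith [sq_nonneg (G x + K x), sq_nonneg (G x - K x)]
      calc ENNReal.ofReal (D x ^ 2) * ENNReal.ofReal (x ^ p)
          ≤ ENNReal.ofReal (2 * G x ^ 2 + 2 * K x ^ 2) * ENNReal.ofReal (x ^ p) :=
            mul_le_mul_left (ENNReal.ofReal_le_ofReal h1) _
        _ = (2 * ENNReal.ofReal (G x ^ 2) + 2 * ENNReal.ofReal (K x ^ 2))
              * ENNReal.ofReal (x ^ p) := by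
            rw [ENNReal.ofReal_add (by positivity) (by positivity),
              ENNReal.ofReal_mul (by norm_num), ENNReal.ofReal_mul (by norm_num)]
            norm_num
        _ = _ := by ring
    have hum : Measurable fun x => ENNReal.ofReal (G x ^ 2) * ENNReal.ofReal (x ^ p) :=
      ((hGm.pow_const 2).ennreal_ofReal).mul hwm'
    have hvm : Measurable fun x => ENNReal.ofReal (K x ^ 2) * ENNReal.ofReal (x ^ p) :=
      ((hKm.pow_const 2).ennreal_ofReal).mul hwm'
    rw [hIDdef]
    refine lt_of_le_of_lt (lintegral_mono hb) ?_
    rw [lintegral_add_left (hum.const_mul 2), lintegral_const_mul 2 hum,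
      lintegral_const_mul 2 hvm]
    exact ENNReal.add_lt_top.mpr
      ⟨ENNReal.mul_lt_top (lt_top_iff_ne_top.mpr ENNReal.ofNat_ne_top) hGfin,
       ENNReal.mul_lt_top (lt_top_iff_ne_top.mpr ENNReal.ofNat_ne_top) hKfin⟩
  have hscale : ID = ENNReal.ofReal ((2:ℝ) ^ (3 - p)) * ID := by
    have h1 : ID = ∫⁻ x in Ioi (0:ℝ),
        ENNReal.ofReal ((4 * D (2*x)) ^ 2) * ENNReal.ofReal (x ^ p) := by
      rw [hIDdef]
      apply lintegral_congr_ae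
      filter_upwards [hDeq] with x hx
      rw [hx]
    have h2 : ∀ x:ℝ, ENNReal.ofReal ((4 * D (2*x)) ^ 2) * ENNReal.ofReal (x ^ p)
        = ENNReal.ofReal 16 * (ENNReal.ofReal (D (2*x) ^ 2) * ENNReal.ofReal (x ^ p)) := by
      intro x
      rw [mul_pow, show (4:ℝ)^2 = 16 by norm_num, ENNReal.ofReal_mul (by norm_num), mul_assoc]
    have h3 := weighted_scale p 2 two_pos (fun y => ENNReal.ofReal (D y ^ 2))
    calc ID = ∫⁻ x in Ioi (0:ℝ),
          ENNReal.ofReal ((4 * D (2*x)) ^ 2) * ENNReal.ofReal (x ^ p) := h1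
      _ = ∫⁻ x in Ioi (0:ℝ),
          ENNReal.ofReal 16 * (ENNReal.ofReal (D (2*x) ^ 2) * ENNReal.ofReal (x ^ p)) :=
          lintegral_congr h2
      _ = ENNReal.ofReal 16
          * ∫⁻ x in Ioi (0:ℝ), ENNReal.ofReal (D (2*x) ^ 2) * ENNReal.ofReal (x ^ p) :=
          lintegral_const_mul' _ _ ENNReal.ofReal_ne_top
      _ = ENNReal.ofReal 16 * (ENNReal.ofReal (2⁻¹ * ((2:ℝ) ^ p)⁻¹) * ID) := by
          rw [h3, ← hIDdef]
      _ = ENNReal.ofReal ((2:ℝ) ^ (3 - p)) * ID := by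
          rw [← mul_assoc, ← ENNReal.ofReal_mul (by norm_num)]
          congr 2
          have h2p : (0:ℝ) < (2:ℝ) ^ p := Real.rpow_pos_of_pos (by norm_num) p
          rw [Real.rpow_sub (by norm_num : (0:ℝ) < 2), show (2:ℝ) ^ (3:ℝ) = 8 by
            rw [show (3:ℝ) = ((3:ℕ):ℝ) by norm_num, Real.rpow_natCast]; norm_num]
          field_simp
          ring
  have hk1 : (1:ℝ≥0∞) < ENNReal.ofReal ((2:ℝ) ^ (3 - p)) := by
    rw [← ENNReal.ofReal_one]
    refine (ENNReal.ofReal_lt_ofReal_iff_of_nonneg (by norm_num)).mpr ?_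
    exact (Real.one_lt_rpow_iff_of_pos (by norm_num)).mpr (Or.inl ⟨one_lt_two, by linarith⟩)
  have hID0 : ID = 0 := by
    by_contra h0
    have hlt : 1 * ID < ENNReal.ofReal ((2:ℝ) ^ (3-p)) * ID :=
      by rw [mul_comm 1 ID, mul_comm _ ID]; exact ENNReal.mul_lt_mul_right h0 hIDfin.ne hk1
    rw [one_mul, ← hscale] at hlt
    exact lt_irrefl _ hlt
  have hDzero : ∀ᵐ x ∂ν, D x = 0 := by
    have hmeas : Measurable fun x => ENNReal.ofReal (D x ^ 2) * ENNReal.ofReal (x ^ p) :=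
      ((hDm.pow_const 2).ennreal_ofReal).mul hwm'
    have h0 := (lintegral_eq_zero_iff hmeas).mp hID0
    filter_upwards [h0, ae_restrict_mem measurableSet_Ioi] with x hx hx0
    simp only [Pi.zero_apply] at hx
    have hwx0 : ENNReal.ofReal (x ^ p) ≠ 0 :=
      (ENNReal.ofReal_pos.mpr (Real.rpow_pos_of_pos hx0 p)).ne'
    rcases mul_eq_zero.mp hx with h | h
    · have h2 : D x ^ 2 ≤ 0 := ENNReal.ofReal_eq_zero.mp h
      nlinarith [sq_nonneg (D x)]
    · exact absurd h hwx0
  filter_upwards [hH'G, hHK, hDzero] with x e3 e4 e5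
  have hGK : G x = K x := by
    have : G x - K x = 0 := e5
    linarith
  rw [e3, e4, hGK]
end

section
/- Let p < 3 and let L ∈ L²(ℝ₊, x^p dx). Then the series H⁽¹⁾(x) = Σ_{n=1}^∞ 2^{-2n} L(2^{-n} x) converges in L²(ℝ₊, x^p dx), the function H⁽¹⁾ belongs to L²(ℝ₊, x^p dx), and it satisfies 4 H⁽¹⁾(2x) − H⁽¹⁾(x) = L(x) for a.e. x > 0; that is, H⁽¹⁾ is the unique solution of this equation in L²(ℝ₊, x^p dx). -/
open MeasureTheory Set Filter

/-- `H⁽¹⁾(x) = Σ_{n=1}^∞ 2^{−2n} L(2^{−n} x)` (indexed here by `n+1`, `n : ℕ`). -/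
noncomputable def Hone (L : ℝ → ℝ) (x : ℝ) : ℝ :=
  ∑' n : ℕ, (2 : ℝ) ^ (-(2 : ℝ) * ((n : ℝ) + 1)) * L ((2 : ℝ) ^ (-((n : ℝ) + 1)) * x)

open scoped ENNReal NNReal

namespace HoneProof

noncomputable def μw (p : ℝ) : Measure ℝ :=
  (volume.restrict (Ioi 0)).withDensity (fun x => ENNReal.ofReal (x ^ p))

lemma meas_dens (p : ℝ) : Measurable fun x : ℝ => ENNReal.ofReal (x ^ p) := by fun_prop

lemma ac1 (p : ℝ) : μw p ≪ volume.restrict (Ioi 0) :=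
  withDensity_absolutelyContinuous _ _

lemma ae_μw_of_ae_restrict (p : ℝ) {P : ℝ → Prop}
    (h : ∀ᵐ x ∂(volume.restrict (Ioi 0)), P x) : ∀ᵐ x ∂(μw p), P x :=
  h.filter_mono (ac1 p).ae_le

lemma ae_restrict_of_ae_μw (p : ℝ) {P : ℝ → Prop} (h : ∀ᵐ x ∂(μw p), P x) :
    ∀ᵐ x ∂(volume.restrict (Ioi 0)), P x := by
  rw [μw, ae_withDensity_iff (meas_dens p)] at h
  filter_upwards [h, ae_restrict_mem measurableSet_Ioi] with x hx hx0
  exact hx (by simp [ENNReal.ofReal_eq_zero, not_le, Real.rpow_pos_of_pos hx0])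

lemma aesm_μw (p : ℝ) {g : ℝ → ℝ} (hg : AEMeasurable g (volume.restrict (Ioi 0))) :
    AEStronglyMeasurable g (μw p) :=
  (hg.mono_ac (ac1 p)).aestronglyMeasurable

lemma map_scale {a : ℝ} (ha : 0 < a) :
    Measure.map (fun x => a * x) (volume.restrict (Ioi 0)) =
      ENNReal.ofReal a⁻¹ • volume.restrict (Ioi 0) := by
  have h1 : (fun x : ℝ => a * x) ⁻¹' (Ioi 0) = Ioi 0 := by
    ext x
    simp only [mem_preimage, mem_Ioi]
    constructor
    · intro h; nlinarith
    · intro h; positivity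
  conv_lhs => rw [show volume.restrict (Ioi (0:ℝ)) =
      volume.restrict ((fun x : ℝ => a * x) ⁻¹' (Ioi 0)) by rw [h1]]
  rw [← Measure.restrict_map (measurable_const_mul a) measurableSet_Ioi,
    Real.map_volume_mul_left (ne_of_gt ha), Measure.restrict_smul,
    abs_of_pos (inv_pos.2 ha)]

lemma aemeas_scale {g : ℝ → ℝ} (hg : AEMeasurable g (volume.restrict (Ioi 0))) {a : ℝ}
    (ha : 0 < a) : AEMeasurable (fun x => g (a * x)) (volume.restrict (Ioi 0)) := by
  have h : AEMeasurable g (Measure.map (fun x => a * x) (volume.restrict (Ioi 0))) := by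
    rw [map_scale ha]; exact hg.smul_measure _
  exact h.comp_aemeasurable (measurable_const_mul a).aemeasurable

lemma ae_scale {P : ℝ → Prop} (h : ∀ᵐ x ∂(volume.restrict (Ioi 0)), P x) {a : ℝ}
    (ha : 0 < a) : ∀ᵐ x ∂(volume.restrict (Ioi 0)), P (a * x) := by
  refine ae_of_ae_map (measurable_const_mul a).aemeasurable ?_
  rw [map_scale ha]
  exact Measure.ae_smul_measure h _


lemma lint_μw (p : ℝ) (g : ℝ → ℝ≥0∞) :
    ∫⁻ x, g x ∂(μw p) = ∫⁻ x in Ioi 0, ENNReal.ofReal (x ^ p) * g x := by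
  rw [μw, lintegral_withDensity_eq_lintegral_mul_non_measurable _ (meas_dens p)]
  · rfl
  · exact ae_of_all _ fun x => ENNReal.ofReal_lt_top

noncomputable def Nq (p : ℝ) (g : ℝ → ℝ) : ℝ≥0∞ :=
  ∫⁻ x, (‖g x‖₊ : ℝ≥0∞) ^ (2 : ℕ) ∂(μw p)

lemma Nq_eq (p : ℝ) (g : ℝ → ℝ) :
    Nq p g = ∫⁻ x in Ioi 0, (‖g x‖₊ : ℝ≥0∞) ^ (2 : ℕ) * ENNReal.ofReal (x ^ p) := by
  rw [Nq, lint_μw]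
  exact lintegral_congr fun x => mul_comm _ _

lemma eLpNorm_eq_Nq (p : ℝ) (g : ℝ → ℝ) :
    eLpNorm g 2 (μw p) = (Nq p g) ^ (1/2 : ℝ) := by
  rw [eLpNorm_eq_lintegral_rpow_enorm_toReal (by norm_num) (by norm_num), Nq]
  norm_num
  rfl


lemma eLpNorm_sq (p : ℝ) (g : ℝ → ℝ) :
    eLpNorm g 2 (μw p) ^ (2 : ℕ) = Nq p g := by
  rw [eLpNorm_eq_Nq, ← ENNReal.rpow_natCast, ← ENNReal.rpow_mul]
  norm_num


lemma Nq_scale (p : ℝ) {g : ℝ → ℝ} (hg : AEMeasurable g (volume.restrict (Ioi 0)))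
    {a : ℝ} (ha : 0 < a) :
    Nq p (fun x => g (a * x)) = ENNReal.ofReal (a ^ (-(p+1))) * Nq p g := by
  set F : ℝ → ℝ≥0∞ := fun y => (‖g y‖₊ : ℝ≥0∞) ^ (2:ℕ) * ENNReal.ofReal ((a⁻¹ * y) ^ p)
    with hFdef
  have hFmeas : AEMeasurable F (Measure.map (fun x => a * x) (volume.restrict (Ioi 0))) := by
    rw [map_scale ha]
    exact AEMeasurable.smul_measure
      ((hg.enorm.pow_const 2).mul ((meas_dens p).comp (measurable_const_mul a⁻¹)).aemeasurable) _
  have step1 : Nq p (fun x => g (a * x)) = ∫⁻ x in Ioi 0, F (a * x) := by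
    rw [Nq_eq]
    refine lintegral_congr fun x => ?_
    simp only [hFdef, inv_mul_cancel_left₀ (ne_of_gt ha)]
  have step2 : ∫⁻ x in Ioi 0, F (a * x) = ENNReal.ofReal a⁻¹ * ∫⁻ y in Ioi 0, F y := by
    rw [← lintegral_map' hFmeas (measurable_const_mul a).aemeasurable, map_scale ha,
      lintegral_smul_measure, smul_eq_mul]
  have step3 : ∫⁻ y in Ioi 0, F y = ENNReal.ofReal (a⁻¹ ^ p) * Nq p g := by
    rw [Nq_eq, ← lintegral_const_mul' _ _ ENNReal.ofReal_ne_top]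
    refine lintegral_congr_ae ?_
    filter_upwards [ae_restrict_mem measurableSet_Ioi] with y hy
    simp only [hFdef]
    rw [Real.mul_rpow (inv_nonneg.2 ha.le) (le_of_lt hy),
      ENNReal.ofReal_mul (Real.rpow_nonneg (inv_nonneg.2 ha.le) p)]
    ring
  rw [step1, step2, step3, ← mul_assoc, ← ENNReal.ofReal_mul (inv_nonneg.2 ha.le)]
  congr 2
  rw [Real.inv_rpow ha.le, ← Real.rpow_neg ha.le, ← Real.rpow_neg_one a,
    ← Real.rpow_add ha]
  ring_nf



lemma ennnorm_tsum_le (g : ℕ → ℝ) : (‖∑' n, g n‖₊ : ℝ≥0∞) ≤ ∑' n, (‖g n‖₊ : ℝ≥0∞) := by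
  by_cases h : Summable fun n => ‖g n‖
  · calc (‖∑' n, g n‖₊ : ℝ≥0∞) = ENNReal.ofReal ‖∑' n, g n‖ :=
        (ofReal_norm _).symm
      _ ≤ ENNReal.ofReal (∑' n, ‖g n‖) :=
        ENNReal.ofReal_le_ofReal (norm_tsum_le_tsum_norm h)
      _ = ∑' n, ENNReal.ofReal ‖g n‖ :=
        ENNReal.ofReal_tsum_of_nonneg (fun n => norm_nonneg _) h
      _ = ∑' n, (‖g n‖₊ : ℝ≥0∞) := tsum_congr fun n => ofReal_norm _
  · have : (∑' n, (‖g n‖₊ : ℝ≥0∞)) = ⊤ := by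
      by_contra hne
      exact h (by simpa using NNReal.summable_coe.2 (ENNReal.tsum_coe_ne_top_iff_summable.1 hne))
    simp [this]

lemma nnnorm_sum_abs (g : ℕ → ℝ → ℝ) (k : ℕ) (x : ℝ) :
    (‖∑ n ∈ Finset.range k, |g n x|‖₊ : ℝ≥0∞) = ∑ n ∈ Finset.range k, (‖g n x‖₊ : ℝ≥0∞) := by
  rw [← enorm_eq_nnnorm, Real.enorm_eq_ofReal (Finset.sum_nonneg fun n _ => abs_nonneg _),
    ENNReal.ofReal_sum_of_nonneg (fun n _ => abs_nonneg _)]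
  exact Finset.sum_congr rfl fun n _ => (Real.enorm_eq_ofReal_abs _).symm

lemma pow_iSup {a : ℕ → ℝ≥0∞} (hmono : Monotone a) :
    (⨆ k, a k) ^ (2:ℕ) = ⨆ k, a k ^ (2:ℕ) := by
  have h1 := tendsto_atTop_iSup hmono
  have h2 := tendsto_atTop_iSup (fun i j hij => pow_le_pow_left' (hmono hij) 2)
  exact tendsto_nhds_unique (((ENNReal.continuous_pow 2).continuousAt).tendsto.comp h1) h2

lemma lint_tsum_sq_le (p : ℝ) (g : ℕ → ℝ → ℝ)
    (hg : ∀ n, AEMeasurable (g n) (volume.restrict (Ioi 0))) :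
    ∫⁻ x, (∑' n, (‖g n x‖₊ : ℝ≥0∞)) ^ (2:ℕ) ∂(μw p)
      ≤ (∑' n, eLpNorm (g n) 2 (μw p)) ^ (2:ℕ) := by
  have hmeas : ∀ n, AEMeasurable (fun x => (‖g n x‖₊ : ℝ≥0∞)) (μw p) :=
    fun n => ((hg n).mono_ac (ac1 p)).enorm
  have hpt : ∀ x, (∑' n, (‖g n x‖₊ : ℝ≥0∞)) ^ (2:ℕ)
      = ⨆ k, (∑ n ∈ Finset.range k, (‖g n x‖₊ : ℝ≥0∞)) ^ (2:ℕ) := by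
    intro x
    rw [ENNReal.tsum_eq_iSup_nat]
    exact pow_iSup fun i j hij =>
      Finset.sum_le_sum_of_subset (Finset.range_subset_range.2 hij)
  rw [lintegral_congr hpt, lintegral_iSup']
  · refine iSup_le fun k => ?_
    have e1 : ∫⁻ x, (∑ n ∈ Finset.range k, (‖g n x‖₊ : ℝ≥0∞)) ^ (2:ℕ) ∂(μw p)
        = Nq p (fun x => ∑ n ∈ Finset.range k, |g n x|) := by
      rw [Nq]
      exact lintegral_congr fun x => by rw [nnnorm_sum_abs]
    rw [e1, ← eLpNorm_sq]
    refine pow_le_pow_left' ?_ 2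
    have e2 : (fun x => ∑ n ∈ Finset.range k, |g n x|)
        = ∑ n ∈ Finset.range k, (fun x => |g n x|) := by
      ext x; simp
    rw [e2]
    refine le_trans (eLpNorm_sum_le (fun n _ => ?_) one_le_two) ?_
    · exact (aesm_μw p (hg n)).norm.congr (by simp [Real.norm_eq_abs])
    · refine le_trans (Finset.sum_le_sum fun n _ => ?_)
        (ENNReal.sum_le_tsum (Finset.range k))
      have : eLpNorm (fun x => |g n x|) 2 (μw p) = eLpNorm (g n) 2 (μw p) := by
        rw [← eLpNorm_norm (g n)]
        simp [Real.norm_eq_abs]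
      exact le_of_eq this
  · exact fun k => (Finset.aemeasurable_fun_sum _ fun n _ => hmeas n).pow_const 2
  · refine ae_of_all _ fun x i j hij => ?_
    exact pow_le_pow_left' (Finset.sum_le_sum_of_subset (Finset.range_subset_range.2 hij)) 2



lemma Nq_const_mul (p : ℝ) (c : ℝ) (h : ℝ → ℝ) :
    Nq p (fun x => c * h x) = (‖c‖₊ : ℝ≥0∞) ^ (2:ℕ) * Nq p h := by
  rw [Nq, Nq, ← lintegral_const_mul' _ _ (by simp [ENNReal.pow_ne_top, ENNReal.coe_ne_top])]
  refine lintegral_congr fun x => ?_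
  rw [nnnorm_mul]
  push_cast
  ring

lemma two_rpow_pos (t : ℝ) : (0:ℝ) < (2:ℝ) ^ t := Real.rpow_pos_of_pos two_pos t

lemma Nq_term (p : ℝ) {g : ℝ → ℝ} (hg : AEMeasurable g (volume.restrict (Ioi 0))) (t : ℝ) :
    Nq p (fun x => (2:ℝ) ^ (-(2:ℝ) * t) * g ((2:ℝ) ^ (-t) * x))
      = ENNReal.ofReal ((2:ℝ) ^ (t * (p - 3))) * Nq p g := by
  rw [Nq_const_mul, Nq_scale p hg (two_rpow_pos (-t))]
  rw [← mul_assoc]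
  congr 1
  rw [← enorm_eq_nnnorm, Real.enorm_eq_ofReal (two_rpow_pos _).le, ← ENNReal.ofReal_pow (two_rpow_pos _).le,
    ← ENNReal.ofReal_mul (by positivity)]
  congr 1
  rw [← Real.rpow_natCast ((2:ℝ) ^ (-(2:ℝ)*t)) 2, ← Real.rpow_mul (by norm_num),
    ← Real.rpow_mul (by norm_num), ← Real.rpow_add two_pos]
  ring_nf

lemma eLpNorm_term (p : ℝ) {g : ℝ → ℝ} (hg : AEMeasurable g (volume.restrict (Ioi 0))) (t : ℝ) :
    eLpNorm (fun x => (2:ℝ) ^ (-(2:ℝ) * t) * g ((2:ℝ) ^ (-t) * x)) 2 (μw p)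
      = ENNReal.ofReal (((2:ℝ) ^ ((p - 3) / 2)) ^ t) * eLpNorm g 2 (μw p) := by
  rw [eLpNorm_eq_Nq, eLpNorm_eq_Nq, Nq_term p hg t,
    ENNReal.mul_rpow_of_nonneg _ _ (by norm_num : (0:ℝ) ≤ 1/2),
    ENNReal.ofReal_rpow_of_nonneg (Real.rpow_nonneg (by norm_num) _) (by norm_num)]
  congr 2
  rw [← Real.rpow_mul (by norm_num), ← Real.rpow_mul (by norm_num)]
  ring_nf

lemma integrand_ae (p : ℝ) (g : ℝ → ℝ) :
    ∀ᵐ x ∂(volume.restrict (Ioi (0:ℝ))),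
      ENNReal.ofReal (g x ^ 2 * x ^ p) = (‖g x‖₊ : ℝ≥0∞) ^ (2:ℕ) * ENNReal.ofReal (x ^ p) := by
  filter_upwards [ae_restrict_mem measurableSet_Ioi] with x hx
  rw [ENNReal.ofReal_mul (by positivity), ← sq_abs,
    ENNReal.ofReal_pow (abs_nonneg _), ← Real.enorm_eq_ofReal_abs]
  rfl

lemma Nq_as_lint (p : ℝ) (g : ℝ → ℝ) :
    Nq p g = ∫⁻ x in Ioi 0, ENNReal.ofReal (g x ^ 2 * x ^ p) := by
  rw [Nq_eq]
  exact (lintegral_congr_ae (integrand_ae p g)).symm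

lemma integral_sq_eq (p : ℝ) {g : ℝ → ℝ} (hg : AEMeasurable g (volume.restrict (Ioi 0))) :
    ∫ x in Ioi 0, g x ^ 2 * x ^ p = (Nq p g).toReal := by
  rw [integral_eq_lintegral_of_nonneg_ae ?_ ?_, ← Nq_as_lint]
  · filter_upwards [ae_restrict_mem measurableSet_Ioi] with x hx
    have : (0:ℝ) < x ^ p := Real.rpow_pos_of_pos hx p
    positivity
  · exact ((hg.pow_const 2).mul
      ((by measurability : Measurable fun x : ℝ => x ^ p)).aemeasurable).aestronglyMeasurable

lemma integrableOn_iff (p : ℝ) {g : ℝ → ℝ} (hg : AEMeasurable g (volume.restrict (Ioi 0))) :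
    IntegrableOn (fun x => g x ^ 2 * x ^ p) (Ioi 0) ↔ Nq p g < ⊤ := by
  have hmeas : AEStronglyMeasurable (fun x => g x ^ 2 * x ^ p) (volume.restrict (Ioi 0)) :=
    ((hg.pow_const 2).mul
      ((by measurability : Measurable fun x : ℝ => x ^ p)).aemeasurable).aestronglyMeasurable
  rw [IntegrableOn, ← memLp_one_iff_integrable,
    MemLp, eLpNorm_one_eq_lintegral_enorm]
  constructor
  · rintro ⟨-, h⟩
    have : Nq p g = ∫⁻ x in Ioi 0, ↑‖g x ^ 2 * x ^ p‖₊ := by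
      rw [Nq_as_lint]
      refine lintegral_congr_ae ?_
      filter_upwards [ae_restrict_mem measurableSet_Ioi] with x hx
      rw [← enorm_eq_nnnorm, Real.enorm_eq_ofReal (by have : (0:ℝ) < x ^ p := Real.rpow_pos_of_pos hx p; positivity)]
    rw [this]
    exact h
  · intro h
    refine ⟨hmeas, ?_⟩
    have : ∫⁻ x in Ioi 0, (‖g x ^ 2 * x ^ p‖₊ : ℝ≥0∞) = Nq p g := by
      rw [Nq_as_lint]
      refine lintegral_congr_ae ?_
      filter_upwards [ae_restrict_mem measurableSet_Ioi] with x hx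
      rw [← enorm_eq_nnnorm, Real.enorm_eq_ofReal (by have : (0:ℝ) < x ^ p := Real.rpow_pos_of_pos hx p; positivity)]
    rw [← this] at h
    exact h



noncomputable def fn (L : ℝ → ℝ) (n : ℕ) (x : ℝ) : ℝ :=
  (2 : ℝ) ^ (-(2 : ℝ) * ((n : ℝ) + 1)) * L ((2 : ℝ) ^ (-((n : ℝ) + 1)) * x)

section Main

variable {p : ℝ} (hp : p < 3) {L : ℝ → ℝ}
  (hLmeas : AEMeasurable L (volume.restrict (Ioi 0)))

include hLmeas

lemma fn_meas (n : ℕ) : AEMeasurable (fn L n) (volume.restrict (Ioi 0)) := by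
  unfold fn
  exact (aemeas_scale hLmeas (two_rpow_pos _)).const_mul _

lemma eLpNorm_fn (n : ℕ) :
    eLpNorm (fn L n) 2 (μw p) =
      ENNReal.ofReal (((2:ℝ) ^ ((p - 3) / 2)) ^ (n + 1 : ℕ)) * eLpNorm L 2 (μw p) := by
  have h := eLpNorm_term p hLmeas ((n : ℝ) + 1)
  rw [show (fun x => (2:ℝ) ^ (-(2:ℝ) * ((n:ℝ)+1)) * L ((2:ℝ) ^ (-((n:ℝ)+1)) * x)) = fn L n
      from rfl] at h
  rw [h, ← Real.rpow_natCast ((2:ℝ) ^ ((p-3)/2)) (n+1)]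
  push_cast
  ring_nf

include hp

lemma tsum_fn_ne_top (hC : eLpNorm L 2 (μw p) ≠ ⊤) :
    (∑' n, eLpNorm (fn L n) 2 (μw p)) ≠ ⊤ := by
  set q : ℝ := (2:ℝ) ^ ((p - 3) / 2) with hq
  have hq0 : 0 ≤ q := (two_rpow_pos _).le
  have hq1 : q < 1 := Real.rpow_lt_one_of_one_lt_of_neg one_lt_two (by linarith)
  have hr1 : ENNReal.ofReal q < 1 := by
    rw [← ENNReal.ofReal_one]
    exact ENNReal.ofReal_lt_ofReal_iff_of_nonneg hq0 |>.2 hq1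
  have key : (∑' n, eLpNorm (fn L n) 2 (μw p))
      ≤ (1 - ENNReal.ofReal q)⁻¹ * eLpNorm L 2 (μw p) := by
    calc (∑' n, eLpNorm (fn L n) 2 (μw p))
        = (∑' n : ℕ, (ENNReal.ofReal q) ^ (n + 1 : ℕ)) * eLpNorm L 2 (μw p) := by
          rw [← ENNReal.tsum_mul_right]
          exact tsum_congr fun n => by
            rw [eLpNorm_fn hLmeas n, ENNReal.ofReal_pow hq0]
      _ ≤ (∑' n : ℕ, (ENNReal.ofReal q) ^ n) * eLpNorm L 2 (μw p) := by
          refine mul_le_mul_left (ENNReal.tsum_le_tsum fun n => ?_) _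
          exact pow_le_pow_of_le_one zero_le hr1.le (Nat.le_succ n)
      _ = (1 - ENNReal.ofReal q)⁻¹ * eLpNorm L 2 (μw p) := by rw [ENNReal.tsum_geometric]
  refine ne_top_of_le_ne_top ?_ key
  refine ENNReal.mul_ne_top ?_ hC
  simp only [Ne, ENNReal.inv_eq_top, tsub_eq_zero_iff_le]
  exact fun h => absurd (lt_of_le_of_lt h hr1) (lt_irrefl _)



lemma ae_summable_fn (hC : eLpNorm L 2 (μw p) ≠ ⊤) :
    ∀ᵐ x ∂(volume.restrict (Ioi (0:ℝ))), Summable fun n => ‖fn L n x‖ := by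
  have hkey := lint_tsum_sq_le p (fn L) (fun n => fn_meas hLmeas n)
  have hne : ∫⁻ x, (∑' n, (‖fn L n x‖₊ : ℝ≥0∞)) ^ (2:ℕ) ∂(μw p) ≠ ⊤ :=
    ne_top_of_le_ne_top (ENNReal.pow_ne_top (tsum_fn_ne_top hp hLmeas hC)) hkey
  have hA : AEMeasurable (fun x => (∑' n, (‖fn L n x‖₊ : ℝ≥0∞)) ^ (2:ℕ)) (μw p) :=
    (AEMeasurable.ennreal_tsum fun n =>
      ((fn_meas hLmeas n).mono_ac (ac1 p)).enorm).pow_const 2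
  have hlt := ae_lt_top' hA hne
  refine ae_restrict_of_ae_μw p (hlt.mono fun x hx => ?_)
  have hne' : (∑' n, (‖fn L n x‖₊ : ℝ≥0∞)) ≠ ⊤ := by
    intro h
    rw [h] at hx
    exact absurd hx (by simp)
  have hs : Summable fun n => ‖fn L n x‖₊ := ENNReal.tsum_coe_ne_top_iff_summable.1 hne'
  simpa [coe_nnnorm] using NNReal.summable_coe.2 hs

lemma Hone_meas (hC : eLpNorm L 2 (μw p) ≠ ⊤) :
    AEMeasurable (Hone L) (volume.restrict (Ioi (0:ℝ))) := by
  refine aemeasurable_of_tendsto_metrizable_ae'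
    (f := fun k x => ∑ n ∈ Finset.range k, fn L n x)
    (fun k => Finset.aemeasurable_fun_sum (Finset.range k) fun n _ => fn_meas hLmeas n) ?_
  refine (ae_summable_fn hp hLmeas hC).mono fun x hx => ?_
  exact hx.of_norm.hasSum.tendsto_sum_nat

omit hp hLmeas in
lemma Nq_congr_ae' {f g : ℝ → ℝ} (h : f =ᵐ[μw p] g) : Nq p f = Nq p g :=
  lintegral_congr_ae (h.mono fun x hx => by simp only [hx])

lemma Nq_Dk_le (hC : eLpNorm L 2 (μw p) ≠ ⊤) (k : ℕ) :
    Nq p (fun x => (∑ n ∈ Finset.range k, fn L n x) - Hone L x)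
      ≤ (∑' n, eLpNorm (fn L (n + k)) 2 (μw p)) ^ (2:ℕ) := by
  have hae : (fun x => (∑ n ∈ Finset.range k, fn L n x) - Hone L x)
      =ᵐ[μw p] fun x => -(∑' n, fn L (n + k) x) := by
    refine ae_μw_of_ae_restrict p ((ae_summable_fn hp hLmeas hC).mono fun x hx => ?_)
    have hs : Summable fun n => fn L n x := hx.of_norm
    have h1 : (∑ i ∈ Finset.range k, fn L i x) + ∑' i, fn L (i + k) x = ∑' i, fn L i x :=
      Summable.sum_add_tsum_nat_add k hs
    have h2 : Hone L x = ∑' i, fn L i x := rfl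
    dsimp only
    rw [h2, ← h1]
    ring
  rw [Nq_congr_ae' hae]
  have hneg : Nq p (fun x => -(∑' n, fn L (n + k) x)) = Nq p (fun x => ∑' n, fn L (n + k) x) := by
    unfold Nq
    exact lintegral_congr fun x => by rw [nnnorm_neg]
  rw [hneg]
  refine le_trans (le_trans (lintegral_mono fun x => ?_)
    (lint_tsum_sq_le p (fun n => fn L (n + k)) fun n => fn_meas hLmeas (n + k))) le_rfl
  exact pow_le_pow_left' (ennnorm_tsum_le _) 2

omit hp in
lemma Nq_Hone_le (hC : eLpNorm L 2 (μw p) ≠ ⊤) :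
    Nq p (Hone L) ≤ (∑' n, eLpNorm (fn L n) 2 (μw p)) ^ (2:ℕ) := by
  refine le_trans (lintegral_mono fun x => ?_) (lint_tsum_sq_le p (fn L) fun n => fn_meas hLmeas n)
  exact pow_le_pow_left' (ennnorm_tsum_le _) 2



omit hp hLmeas in
lemma harg_aux (t x : ℝ) : (2:ℝ) ^ (-(t+1)) * (2 * x) = (2:ℝ) ^ (-t) * x := by
  rw [← mul_assoc, show (2:ℝ) ^ (-(t+1)) * 2 = (2:ℝ) ^ (-(t+1) + 1) by
      rw [Real.rpow_add two_pos, Real.rpow_one],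
    show -(t+1) + (1:ℝ) = -t by ring]

omit hp hLmeas in
lemma hcoef_aux (t : ℝ) : (4:ℝ) * (2:ℝ) ^ (-(2:ℝ) * (t+1)) = (2:ℝ) ^ (-(2:ℝ) * t) := by
  rw [show (4:ℝ) = (2:ℝ) ^ (2:ℝ) by
      rw [show (2:ℝ) = ((2:ℕ):ℝ) by norm_num, Real.rpow_natCast]; norm_num,
    ← Real.rpow_add two_pos, show (2:ℝ) + -(2:ℝ) * (t+1) = -(2:ℝ)*t by ring]

lemma funct_eq (hC : eLpNorm L 2 (μw p) ≠ ⊤) :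
    ∀ᵐ x ∂(volume.restrict (Ioi (0:ℝ))), 4 * Hone L (2 * x) - Hone L x = L x := by
  have h1 := ae_summable_fn hp hLmeas hC
  have h2 := ae_scale h1 (two_pos : (0:ℝ) < 2)
  filter_upwards [h1, h2] with x hx h2x
  set e : ℕ → ℝ := fun n => (2:ℝ) ^ (-(2:ℝ) * (n:ℝ)) * L ((2:ℝ) ^ (-(n:ℝ)) * x) with he
  have he4 : ∀ n : ℕ, (4:ℝ) * fn L n (2 * x) = e n := by
    intro n
    unfold fn
    rw [he]
    dsimp only
    rw [harg_aux (n:ℝ) x, ← mul_assoc, hcoef_aux (n:ℝ)]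
  have he0 : e 0 = L x := by
    simp [he, Real.rpow_zero]
  have hes : ∀ n : ℕ, e (n + 1) = fn L n x := by
    intro n
    simp only [he, fn, Nat.cast_add, Nat.cast_one]
  have hesum : Summable e := by
    rw [← summable_nat_add_iff 1]
    exact (funext hes : (fun n => e (n+1)) = fun n => fn L n x) ▸ hx.of_norm
  have hmain : 4 * Hone L (2 * x) = ∑' n, e n := by
    rw [show Hone L (2 * x) = ∑' n, fn L n (2 * x) from rfl, ← tsum_mul_left]
    exact tsum_congr he4
  have htail : ∑' n, e (n + 1) = Hone L x := tsum_congr hes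
  rw [hmain, Summable.tsum_eq_zero_add hesum, he0, htail]
  ring



lemma eLpNorm_Dk_le (hC : eLpNorm L 2 (μw p) ≠ ⊤) (k : ℕ) :
    eLpNorm (fun x => (∑ n ∈ Finset.range k, fn L n x) - Hone L x) 2 (μw p)
      ≤ ∑' n, eLpNorm (fn L (n + k)) 2 (μw p) := by
  rw [eLpNorm_eq_Nq]
  refine le_trans (ENNReal.rpow_le_rpow (Nq_Dk_le hp hLmeas hC k) (by norm_num)) ?_
  rw [← ENNReal.rpow_natCast (∑' n, eLpNorm (fn L (n + k)) 2 (μw p)) 2, ← ENNReal.rpow_mul]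
  norm_num

lemma uniqueness (hC : eLpNorm L 2 (μw p) ≠ ⊤) (H' : ℝ → ℝ)
    (hH'm : AEMeasurable H' (volume.restrict (Ioi 0)))
    (hH'i : IntegrableOn (fun x => (H' x) ^ 2 * x ^ p) (Ioi 0))
    (hH'e : ∀ᵐ x ∂(volume.restrict (Ioi (0:ℝ))), 4 * H' (2 * x) - H' x = L x) :
    H' =ᵐ[volume.restrict (Ioi (0:ℝ))] Hone L := by
  have hH'Nq : Nq p H' < ⊤ := (integrableOn_iff p hH'm).1 hH'i
  have hH'C : eLpNorm H' 2 (μw p) ≠ ⊤ := by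
    rw [eLpNorm_eq_Nq]
    exact ENNReal.rpow_ne_top_of_nonneg (by norm_num) hH'Nq.ne
  have haeQ : ∀ᵐ x ∂(volume.restrict (Ioi (0:ℝ))), ∀ j : ℕ,
      4 * H' (2 * ((2:ℝ) ^ (-((j:ℝ)+1)) * x)) - H' ((2:ℝ) ^ (-((j:ℝ)+1)) * x)
        = L ((2:ℝ) ^ (-((j:ℝ)+1)) * x) :=
    ae_all_iff.2 fun j => ae_scale hH'e (two_rpow_pos (-((j:ℝ)+1)))
  have hkey : ∀ᵐ x ∂(volume.restrict (Ioi (0:ℝ))), ∀ k : ℕ,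
      H' x - (2:ℝ) ^ (-(2:ℝ) * (k:ℝ)) * H' ((2:ℝ) ^ (-(k:ℝ)) * x)
        = ∑ n ∈ Finset.range k, fn L n x := by
    refine haeQ.mono fun x hx k => ?_
    induction k with
    | zero => simp [Real.rpow_zero]
    | succ k ih =>
      have hj := hx k
      have harg2 : (2:ℝ) * ((2:ℝ) ^ (-((k:ℝ)+1)) * x) = (2:ℝ) ^ (-(k:ℝ)) * x := by
        rw [show (2:ℝ) * ((2:ℝ) ^ (-((k:ℝ)+1)) * x) = (2:ℝ) ^ (-((k:ℝ)+1)) * (2 * x) by ring]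
        exact harg_aux (k:ℝ) x
      rw [harg2] at hj
      have hc : (2:ℝ) ^ (-(2:ℝ) * (k:ℝ)) = 4 * (2:ℝ) ^ (-(2:ℝ) * ((k:ℝ)+1)) :=
        (hcoef_aux (k:ℝ)).symm
      have hfn : fn L k x = (2:ℝ) ^ (-(2:ℝ) * ((k:ℝ)+1)) * L ((2:ℝ) ^ (-((k:ℝ)+1)) * x) := rfl
      rw [Finset.sum_range_succ, ← ih, hfn]
      push_cast
      linear_combination (2:ℝ) ^ (-(2:ℝ) * ((k:ℝ)+1)) * hj
        + H' ((2:ℝ) ^ (-(k:ℝ)) * x) * hc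
  have hDk' : ∀ k : ℕ, (fun x => H' x - ∑ n ∈ Finset.range k, fn L n x)
      =ᵐ[μw p] fun x => (2:ℝ) ^ (-(2:ℝ) * (k:ℝ)) * H' ((2:ℝ) ^ (-(k:ℝ)) * x) := fun k =>
    ae_μw_of_ae_restrict p (hkey.mono fun x hx => by dsimp only; linarith [hx k])
  set c := eLpNorm (fun x => H' x - Hone L x) 2 (μw p) with hc
  set q : ℝ := (2:ℝ) ^ ((p - 3) / 2) with hqdef
  have hq0 : 0 ≤ q := (two_rpow_pos _).le
  have hq1 : q < 1 := Real.rpow_lt_one_of_one_lt_of_neg one_lt_two (by linarith)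
  have hbound : ∀ k : ℕ, c ≤ ENNReal.ofReal (q ^ k) * eLpNorm H' 2 (μw p)
      + ∑' n, eLpNorm (fn L (n + k)) 2 (μw p) := by
    intro k
    have hsplit : (fun x => H' x - Hone L x)
        = (fun x => H' x - ∑ n ∈ Finset.range k, fn L n x)
          + fun x => (∑ n ∈ Finset.range k, fn L n x) - Hone L x := by
      funext x
      simp only [Pi.add_apply]
      ring
    have h1 : eLpNorm (fun x => H' x - ∑ n ∈ Finset.range k, fn L n x) 2 (μw p)
        = ENNReal.ofReal (q ^ k) * eLpNorm H' 2 (μw p) := by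
      rw [eLpNorm_congr_ae (hDk' k), eLpNorm_term p hH'm (k:ℝ), Real.rpow_natCast]
    have hm1 : AEStronglyMeasurable
        (fun x => H' x - ∑ n ∈ Finset.range k, fn L n x) (μw p) :=
      aesm_μw p (hH'm.sub (Finset.aemeasurable_fun_sum _ fun n _ => fn_meas hLmeas n))
    have hm2 : AEStronglyMeasurable
        (fun x => (∑ n ∈ Finset.range k, fn L n x) - Hone L x) (μw p) :=
      aesm_μw p ((Finset.aemeasurable_fun_sum _ fun n _ => fn_meas hLmeas n).sub
        (Hone_meas hp hLmeas hC))
    calc c = eLpNorm ((fun x => H' x - ∑ n ∈ Finset.range k, fn L n x)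
          + fun x => (∑ n ∈ Finset.range k, fn L n x) - Hone L x) 2 (μw p) := by
          rw [hc, hsplit]
      _ ≤ eLpNorm (fun x => H' x - ∑ n ∈ Finset.range k, fn L n x) 2 (μw p)
          + eLpNorm (fun x => (∑ n ∈ Finset.range k, fn L n x) - Hone L x) 2 (μw p) :=
          eLpNorm_add_le hm1 hm2 one_le_two
      _ ≤ ENNReal.ofReal (q ^ k) * eLpNorm H' 2 (μw p)
          + ∑' n, eLpNorm (fn L (n + k)) 2 (μw p) := by
          rw [h1]
          exact add_le_add le_rfl (eLpNorm_Dk_le hp hLmeas hC k)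
  have hlim : Tendsto (fun k : ℕ => ENNReal.ofReal (q ^ k) * eLpNorm H' 2 (μw p)
      + ∑' n, eLpNorm (fn L (n + k)) 2 (μw p)) atTop (nhds 0) := by
    have hr1 : ENNReal.ofReal q < 1 := by
      rw [← ENNReal.ofReal_one]
      exact (ENNReal.ofReal_lt_ofReal_iff_of_nonneg hq0).2 hq1
    have ht1 : Tendsto (fun k : ℕ => ENNReal.ofReal (q ^ k) * eLpNorm H' 2 (μw p))
        atTop (nhds 0) := by
      have := (ENNReal.Tendsto.mul_const
        (ENNReal.tendsto_pow_atTop_nhds_zero_of_lt_one hr1) (Or.inr hH'C))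
      simpa [ENNReal.ofReal_pow hq0] using this
    have ht2 : Tendsto (fun k : ℕ => ∑' n, eLpNorm (fn L (n + k)) 2 (μw p)) atTop (nhds 0) :=
      ENNReal.tendsto_sum_nat_add _ (tsum_fn_ne_top hp hLmeas hC)
    simpa using ht1.add ht2
  have hc0 : c = 0 := le_antisymm (ge_of_tendsto' hlim hbound) zero_le
  have hae0 : (fun x => H' x - Hone L x) =ᵐ[μw p] 0 := by
    refine (eLpNorm_eq_zero_iff ?_ (by norm_num)).1 hc0
    exact aesm_μw p (hH'm.sub (Hone_meas hp hLmeas hC))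
  refine (ae_restrict_of_ae_μw p hae0).mono fun x hx => ?_
  have : H' x - Hone L x = 0 := hx
  linarith

end Main

end HoneProof

/-- For `p < 3` and `L ∈ L²(ℝ₊, xᵖ dx)`, the series defining `H⁽¹⁾` converges in
`L²(ℝ₊, xᵖ dx)`, `H⁽¹⁾` belongs to that space, and it is the unique solution there of
`4 H(2x) − H(x) = L(x)` a.e. on `(0,∞)`. -/
theorem Hone_solves_dilation_eq (p : ℝ) (hp : p < 3) (L : ℝ → ℝ)
    (hLmeas : AEMeasurable L (volume.restrict (Ioi 0)))
    (hL : IntegrableOn (fun x => (L x) ^ 2 * x ^ p) (Ioi 0)) :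
    Tendsto (fun k : ℕ => ∫ x in Ioi (0 : ℝ),
        ((∑ n ∈ Finset.range k,
          (2 : ℝ) ^ (-(2 : ℝ) * ((n : ℝ) + 1)) * L ((2 : ℝ) ^ (-((n : ℝ) + 1)) * x))
          - Hone L x) ^ 2 * x ^ p) atTop (nhds 0) ∧
    IntegrableOn (fun x => (Hone L x) ^ 2 * x ^ p) (Ioi 0) ∧
    (∀ᵐ x ∂(volume.restrict (Ioi (0 : ℝ))), 4 * Hone L (2 * x) - Hone L x = L x) ∧
    (∀ H' : ℝ → ℝ, AEMeasurable H' (volume.restrict (Ioi 0)) →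
      IntegrableOn (fun x => (H' x) ^ 2 * x ^ p) (Ioi 0) →
      (∀ᵐ x ∂(volume.restrict (Ioi (0 : ℝ))), 4 * H' (2 * x) - H' x = L x) →
      H' =ᵐ[volume.restrict (Ioi (0 : ℝ))] Hone L) := by
  have hNqL : HoneProof.Nq p L < ⊤ := (HoneProof.integrableOn_iff p hLmeas).1 hL
  have hC : eLpNorm L 2 (HoneProof.μw p) ≠ ⊤ := by
    rw [HoneProof.eLpNorm_eq_Nq]
    exact ENNReal.rpow_ne_top_of_nonneg (by norm_num) hNqL.ne
  have htot := HoneProof.tsum_fn_ne_top hp hLmeas hC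
  have hHmeas := HoneProof.Hone_meas hp hLmeas hC
  refine ⟨?_, ?_, HoneProof.funct_eq hp hLmeas hC,
    fun H' h1 h2 h3 => HoneProof.uniqueness hp hLmeas hC H' h1 h2 h3⟩
  · have hDmeas : ∀ k : ℕ, AEMeasurable
        (fun x => (∑ n ∈ Finset.range k, HoneProof.fn L n x) - Hone L x)
        (volume.restrict (Ioi 0)) := fun k =>
      (Finset.aemeasurable_fun_sum _ fun n _ => HoneProof.fn_meas hLmeas n).sub hHmeas
    have heq : (fun k : ℕ => ∫ x in Ioi (0:ℝ),
        ((∑ n ∈ Finset.range k,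
          (2 : ℝ) ^ (-(2 : ℝ) * ((n : ℝ) + 1)) * L ((2 : ℝ) ^ (-((n : ℝ) + 1)) * x))
          - Hone L x) ^ 2 * x ^ p)
        = fun k => (HoneProof.Nq p
            (fun x => (∑ n ∈ Finset.range k, HoneProof.fn L n x) - Hone L x)).toReal :=
      funext fun k => HoneProof.integral_sq_eq p (hDmeas k)
    rw [heq]
    have hNqD : Tendsto (fun k => HoneProof.Nq p
        (fun x => (∑ n ∈ Finset.range k, HoneProof.fn L n x) - Hone L x)) atTop (nhds 0) := by
      have hT2 : Tendsto (fun k : ℕ =>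
          (∑' n, eLpNorm (HoneProof.fn L (n + k)) 2 (HoneProof.μw p)) ^ (2:ℕ))
          atTop (nhds 0) := by
        have := ((ENNReal.continuous_pow 2).tendsto 0).comp
          (ENNReal.tendsto_sum_nat_add _ htot)
        simpa [Function.comp_def] using this
      exact tendsto_of_tendsto_of_tendsto_of_le_of_le tendsto_const_nhds hT2
        (fun k => zero_le) (fun k => HoneProof.Nq_Dk_le hp hLmeas hC k)
    have := (ENNReal.tendsto_toReal (by simp : (0:ℝ≥0∞) ≠ ⊤)).comp hNqD
    simpa [Function.comp_def] using this
  · exact (HoneProof.integrableOn_iff p hHmeas).2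
      (lt_of_le_of_lt (HoneProof.Nq_Hone_le hLmeas hC) (ENNReal.pow_lt_top htot.lt_top))
end

section
/- Let N ∈ L²(ℝ₊) with N(x) > 0 for a.e. x > 0, and let L ∈ L²(ℝ₊). Then there exists a unique function B with B·N ∈ L²(ℝ₊) (i.e., B ∈ L²(ℝ₊, N² dx)) such that 4 B(2x) N(2x) − B(x) N(x) = L(x) for a.e. x > 0. -/
open MeasureTheory Set Filter
open scoped ENNReal NNReal

set_option maxHeartbeats 1000000

noncomputable section DivRateAux

local notation "μ₀" => volume.restrict (Ioi (0:ℝ))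

lemma divrate_mapMul {c : ℝ} (hc : 0 < c) :
    (volume.restrict (Ioi (0:ℝ))).map (fun x => c * x)
      = ENNReal.ofReal c⁻¹ • volume.restrict (Ioi (0:ℝ)) := by
  ext s hs
  rw [Measure.map_apply (measurable_const_mul c) hs,
    Measure.restrict_apply ((measurable_const_mul c) hs),
    Measure.smul_apply, Measure.restrict_apply hs, smul_eq_mul]
  have hset : (fun x : ℝ => c * x) ⁻¹' s ∩ Ioi 0 = (c * ·) ⁻¹' (s ∩ Ioi 0) := by
    ext x
    simp only [mem_inter_iff, mem_preimage, mem_Ioi]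
    refine and_congr_right fun _ => ⟨fun h => mul_pos hc h, fun h => ?_⟩
    nlinarith
  rw [hset, Real.volume_preimage_mul_left hc.ne', abs_of_pos (inv_pos.mpr hc)]

lemma divrate_qmp {c : ℝ} (hc : 0 < c) :
    Measure.QuasiMeasurePreserving (fun x : ℝ => c * x) μ₀ μ₀ := by
  refine ⟨measurable_const_mul c, ?_⟩
  rw [divrate_mapMul hc]
  exact Measure.smul_absolutelyContinuous

lemma divrate_aeComp {c : ℝ} (hc : 0 < c) {P : ℝ → Prop}
    (h : ∀ᵐ x ∂μ₀, P x) : ∀ᵐ x ∂μ₀, P (c * x) :=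
  (divrate_qmp hc).tendsto_ae.eventually h

lemma divrate_memComp {g : ℝ → ℝ} (hg : MemLp g 2 μ₀) {c : ℝ} (hc : 0 < c) :
    MemLp (fun x => g (c * x)) 2 μ₀ := by
  have hmem : MemLp g 2 ((volume.restrict (Ioi (0:ℝ))).map (fun x : ℝ => c * x)) := by
    rw [divrate_mapMul hc]
    exact hg.smul_measure ENNReal.ofReal_ne_top
  exact ((Homeomorph.mulLeft₀ c hc.ne').toMeasurableEquiv.memLp_map_measure_iff).1 hmem

lemma divrate_eLpComp (g : ℝ → ℝ) {c : ℝ} (hc : 0 < c) :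
    eLpNorm (fun x => g (c * x)) 2 μ₀
      = ENNReal.ofReal c⁻¹ ^ ((1:ℝ)/2) * eLpNorm g 2 μ₀ := by
  have h := ((Homeomorph.mulLeft₀ c hc.ne').toMeasurableEquiv.measurableEmbedding.eLpNorm_map_measure
    (μ := μ₀) (g := g) (p := 2))
  have hco : ⇑(Homeomorph.mulLeft₀ c hc.ne').toMeasurableEquiv = (fun x : ℝ => c * x) := rfl
  rw [hco] at h
  rw [divrate_mapMul hc, eLpNorm_smul_measure_of_ne_top (by norm_num : (2:ℝ≥0∞) ≠ ∞)] at h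
  have hexp : ((1:ℝ≥0∞) / 2).toReal = (1:ℝ)/2 := by
    simp [ENNReal.toReal_div]
  rw [hexp] at h
  have hfun : (fun x => g (c * x)) = g ∘ (fun x => c * x) := rfl
  rw [hfun, ← h, smul_eq_mul]

end DivRateAux


/-- The contraction map `T G (x) = (G (x/2) + L (x/2)) / 4` on `L²(Ioi 0)`. -/
noncomputable def divrateT (L : ℝ → ℝ) (hL : MemLp L 2 (volume.restrict (Ioi (0:ℝ))))
    (G : Lp ℝ 2 (volume.restrict (Ioi (0:ℝ)))) : Lp ℝ 2 (volume.restrict (Ioi (0:ℝ))) :=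
  MemLp.toLp (fun x => (4:ℝ)⁻¹ * ((G : ℝ → ℝ) (2⁻¹ * x) + L (2⁻¹ * x)))
    (((divrate_memComp (Lp.memLp G) (by norm_num : (0:ℝ) < 2⁻¹)).add
      (divrate_memComp hL (by norm_num : (0:ℝ) < 2⁻¹))).const_mul _)

lemma divrateT_contracting (L : ℝ → ℝ) (hL : MemLp L 2 (volume.restrict (Ioi (0:ℝ)))) :
    ContractingWith (2⁻¹ : ℝ≥0) (divrateT L hL) := by
  constructor
  · have h : ((2⁻¹ : ℝ≥0) : ℝ) < 1 := by norm_num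
    exact_mod_cast h
  · intro G₁ G₂
    have key : edist (divrateT L hL G₁) (divrateT L hL G₂)
        = eLpNorm (fun x => (4:ℝ)⁻¹ * ((G₁ : ℝ → ℝ) (2⁻¹ * x) - (G₂ : ℝ → ℝ) (2⁻¹ * x))) 2
            (volume.restrict (Ioi (0:ℝ))) := by
      rw [Lp.edist_def]
      apply eLpNorm_congr_ae
      filter_upwards [MemLp.coeFn_toLp (f := fun x => (4:ℝ)⁻¹ * ((G₁ : ℝ → ℝ) (2⁻¹ * x) + L (2⁻¹ * x)))
          (((divrate_memComp (Lp.memLp G₁) (by norm_num : (0:ℝ) < 2⁻¹)).add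
            (divrate_memComp hL (by norm_num : (0:ℝ) < 2⁻¹))).const_mul _),
        MemLp.coeFn_toLp (f := fun x => (4:ℝ)⁻¹ * ((G₂ : ℝ → ℝ) (2⁻¹ * x) + L (2⁻¹ * x)))
          (((divrate_memComp (Lp.memLp G₂) (by norm_num : (0:ℝ) < 2⁻¹)).add
            (divrate_memComp hL (by norm_num : (0:ℝ) < 2⁻¹))).const_mul _)] with x h1 h2
      simp only [Pi.sub_apply, divrateT, h1, h2]
      ring
    rw [key]
    have hsmul : (fun x => (4:ℝ)⁻¹ * ((G₁ : ℝ → ℝ) (2⁻¹ * x) - (G₂ : ℝ → ℝ) (2⁻¹ * x)))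
        = (4:ℝ)⁻¹ • (fun x => ((G₁ : ℝ → ℝ) - (G₂ : ℝ → ℝ)) (2⁻¹ * x)) := by
      funext x; simp [Pi.sub_apply]
    rw [hsmul, eLpNorm_const_smul,
      divrate_eLpComp ((G₁ : ℝ → ℝ) - (G₂ : ℝ → ℝ)) (by norm_num : (0:ℝ) < 2⁻¹)]
    rw [Lp.edist_def]
    have h2 : ENNReal.ofReal ((2:ℝ)⁻¹)⁻¹ = (2 : ℝ≥0∞) := by
      norm_num
    rw [h2]
    have hb : (2 : ℝ≥0∞) ^ ((1:ℝ)/2) ≤ 2 := by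
      calc (2 : ℝ≥0∞) ^ ((1:ℝ)/2) ≤ (2 : ℝ≥0∞) ^ (1:ℝ) :=
            ENNReal.rpow_le_rpow_of_exponent_le (by norm_num) (by norm_num)
        _ = 2 := by simp
    have hnorm : (‖(4:ℝ)⁻¹‖₊ : ℝ≥0∞) = 4⁻¹ := by
      simp [nnnorm_inv]
    calc (‖(4:ℝ)⁻¹‖₊ : ℝ≥0∞) • ((2 : ℝ≥0∞) ^ ((1:ℝ)/2)
            * eLpNorm ((G₁ : ℝ → ℝ) - (G₂ : ℝ → ℝ)) 2 (volume.restrict (Ioi (0:ℝ))))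
        ≤ (4⁻¹ : ℝ≥0∞) * (2 * eLpNorm ((G₁ : ℝ → ℝ) - (G₂ : ℝ → ℝ)) 2 (volume.restrict (Ioi (0:ℝ)))) := by
          rw [hnorm, smul_eq_mul]
          exact mul_le_mul_right (mul_le_mul_left hb _) _
      _ = (2⁻¹ : ℝ≥0∞) * eLpNorm ((G₁ : ℝ → ℝ) - (G₂ : ℝ → ℝ)) 2 (volume.restrict (Ioi (0:ℝ))) := by
          rw [← mul_assoc]
          congr 1
          rw [show (4 : ℝ≥0∞) = 2 * 2 by norm_num, ENNReal.mul_inv (by norm_num) (by norm_num)]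
          rw [mul_assoc, ENNReal.inv_mul_cancel (by norm_num) (by norm_num), mul_one]
      _ = ((2⁻¹ : ℝ≥0) : ℝ≥0∞) * eLpNorm ((G₁ : ℝ → ℝ) - (G₂ : ℝ → ℝ)) 2 (volume.restrict (Ioi (0:ℝ))) := by
          norm_num

/-- Given `N ∈ L²(ℝ₊)` with `N > 0` a.e. and `L ∈ L²(ℝ₊)`, there is a unique `B` with
`B·N ∈ L²(ℝ₊)` (i.e. `B ∈ L²(ℝ₊, N² dx)`) solving `4 B(2x) N(2x) − B(x) N(x) = L(x)`
for a.e. `x > 0`; uniqueness holds up to a.e. equality. -/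
theorem exists_unique_division_rate (N L : ℝ → ℝ)
    (hN : MemLp N 2 (volume.restrict (Ioi 0)))
    (hNpos : ∀ᵐ x ∂(volume.restrict (Ioi (0 : ℝ))), 0 < N x)
    (hL : MemLp L 2 (volume.restrict (Ioi 0))) :
    ∃ B : ℝ → ℝ, (MemLp (fun x => B x * N x) 2 (volume.restrict (Ioi 0)) ∧
      (∀ᵐ x ∂(volume.restrict (Ioi (0 : ℝ))),
        4 * B (2 * x) * N (2 * x) - B x * N x = L x)) ∧
      ∀ B' : ℝ → ℝ, MemLp (fun x => B' x * N x) 2 (volume.restrict (Ioi 0)) →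
        (∀ᵐ x ∂(volume.restrict (Ioi (0 : ℝ))),
          4 * B' (2 * x) * N (2 * x) - B' x * N x = L x) →
        B' =ᵐ[volume.restrict (Ioi (0 : ℝ))] B := by
  classical
  have hcon := divrateT_contracting L hL
  set μ := volume.restrict (Ioi (0:ℝ)) with hμ
  -- fixed point
  obtain ⟨G, hGfix, hGuniq⟩ : ∃ G, divrateT L hL G = G ∧
      ∀ G', divrateT L hL G' = G' → G' = G := by
    refine ⟨hcon.fixedPoint (divrateT L hL), hcon.fixedPoint_isFixedPt,
      fun G' h => hcon.fixedPoint_unique h⟩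
  set g : ℝ → ℝ := (G : ℝ → ℝ) with hgdef
  have hg : MemLp g 2 μ := Lp.memLp G
  -- fixed point equation as a.e. statement
  have hfe : ∀ᵐ x ∂μ, (4:ℝ)⁻¹ * (g (2⁻¹ * x) + L (2⁻¹ * x)) = g x := by
    have h := MemLp.coeFn_toLp (f := fun x => (4:ℝ)⁻¹ * (g (2⁻¹ * x) + L (2⁻¹ * x)))
      (((divrate_memComp hg (by norm_num : (0:ℝ) < 2⁻¹)).add
        (divrate_memComp hL (by norm_num : (0:ℝ) < 2⁻¹))).const_mul _)
    have h2 : (divrateT L hL G : ℝ → ℝ) =ᵐ[μ] fun x => (4:ℝ)⁻¹ * (g (2⁻¹ * x) + L (2⁻¹ * x)) := h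
    rw [hGfix] at h2
    exact h2.symm
  -- transfer along x ↦ 2x
  have hfe2 : ∀ᵐ x ∂μ, 4 * g (2 * x) - g x = L x := by
    have h := divrate_aeComp (by norm_num : (0:ℝ) < 2) hfe
    filter_upwards [h] with x hx
    have hxx : (2:ℝ)⁻¹ * (2 * x) = x := by ring
    rw [hxx] at hx
    linarith
  have hN2 : ∀ᵐ x ∂μ, 0 < N (2 * x) := divrate_aeComp (by norm_num : (0:ℝ) < 2) hNpos
  refine ⟨fun x => g x / N x, ⟨?_, ?_⟩, ?_⟩
  · refine (memLp_congr_ae ?_).mpr hg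
    filter_upwards [hNpos] with x hx
    field_simp
  · filter_upwards [hfe2, hNpos, hN2] with x h1 h2 h3
    have e1 : g (2 * x) / N (2 * x) * N (2 * x) = g (2 * x) := div_mul_cancel₀ _ h3.ne'
    have e2 : g x / N x * N x = g x := div_mul_cancel₀ _ h2.ne'
    have e3 : 4 * (g (2 * x) / N (2 * x)) * N (2 * x)
        = 4 * (g (2 * x) / N (2 * x) * N (2 * x)) := by ring
    rw [e3, e1, e2]
    linarith
  · intro B' hB' heqB'
    set G' : ℝ → ℝ := fun x => B' x * N x with hG'def
    -- G' satisfies the fixed point equation a.e.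
    have hfe' : ∀ᵐ x ∂μ, G' x = (4:ℝ)⁻¹ * (G' (2⁻¹ * x) + L (2⁻¹ * x)) := by
      have h := divrate_aeComp (by norm_num : (0:ℝ) < 2⁻¹) heqB'
      filter_upwards [h] with x hx
      have hxx : (2:ℝ) * (2⁻¹ * x) = x := by ring
      rw [hxx] at hx
      simp only [hG'def]
      linarith
    have hfix' : divrateT L hL (hB'.toLp G') = hB'.toLp G' := by
      apply Lp.ext
      have hco : (hB'.toLp G' : ℝ → ℝ) =ᵐ[μ] G' := MemLp.coeFn_toLp hB'
      have hco2 : ∀ᵐ x ∂μ, (hB'.toLp G' : ℝ → ℝ) (2⁻¹ * x) = G' (2⁻¹ * x) :=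
        divrate_aeComp (by norm_num : (0:ℝ) < 2⁻¹) hco
      have hcoT : (divrateT L hL (hB'.toLp G') : ℝ → ℝ) =ᵐ[μ]
          fun x => (4:ℝ)⁻¹ * ((hB'.toLp G' : ℝ → ℝ) (2⁻¹ * x) + L (2⁻¹ * x)) :=
        MemLp.coeFn_toLp _
      filter_upwards [hcoT, hco, hco2, hfe'] with x h1 h2 h3 h4
      rw [h1, h3, h2, h4]
    have hGG : hB'.toLp G' = G := hGuniq _ hfix'
    have hG'g : G' =ᵐ[μ] g := by
      have h1 : (hB'.toLp G' : ℝ → ℝ) =ᵐ[μ] G' := MemLp.coeFn_toLp hB'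
      rw [hGG] at h1
      exact h1.symm
    filter_upwards [hG'g, hNpos] with x h1 h2
    have hh : B' x * N x = g x := h1
    field_simp
    linarith [hh]
end

section
/- Let p < 3 and u ∈ L²(ℝ₊, y^p dy). Then 4 ∫₀^∞ u(y)² y^p dy − ∫₀^∞ u(y/2) u(y) y^p dy ≥ (4 − 2^{(p+1)/2}) ∫₀^∞ u(y)² y^p dy, and in particular the bilinear form a(u,v) = 4 ∫₀^∞ u(y) v(y) y^p dy − ∫₀^∞ u(y/2) v(y) y^p dy is coercive on L²(ℝ₊, y^p dy) with coercivity constant 4 − 2^{(p+1)/2} > 0. -/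
open MeasureTheory Set

/-- Coercivity of the bilinear form `a(u,v) = 4∫u v yᵖ − ∫u(y/2) v(y) yᵖ` on
`L²(ℝ₊, yᵖ dy)` for `p < 3`, with coercivity constant `4 − 2^((p+1)/2) > 0`. -/
theorem coercivity_strategy_one (p : ℝ) (hp : p < 3) (u : ℝ → ℝ)
    (humeas : AEMeasurable u (volume.restrict (Ioi 0)))
    (hu : IntegrableOn (fun y => (u y) ^ 2 * y ^ p) (Ioi 0)) :
    (0 : ℝ) < 4 - 2 ^ ((p + 1) / 2) ∧
      (4 - 2 ^ ((p + 1) / 2)) * ∫ y in Ioi (0 : ℝ), (u y) ^ 2 * y ^ p ≤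
        4 * (∫ y in Ioi (0 : ℝ), (u y) ^ 2 * y ^ p) -
          ∫ y in Ioi (0 : ℝ), u (y / 2) * u y * y ^ p := by
  have hclt : (2 : ℝ) ^ ((p + 1) / 2) < 4 := by
    have h4 : (4 : ℝ) = 2 ^ (2 : ℝ) := by
      rw [show (2:ℝ) = ((2:ℕ):ℝ) by norm_num, Real.rpow_natCast]; norm_num
    rw [h4]
    exact Real.rpow_lt_rpow_left_iff (by norm_num) |>.mpr (by linarith)
  refine ⟨by linarith, ?_⟩
  set c : ℝ := 2 ^ ((p + 1) / 2) with hc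
  set t : ℝ := 2 ^ (-((p + 1) / 2)) with htdef
  have ht : 0 < t := Real.rpow_pos_of_pos (by norm_num) _
  set I : ℝ := ∫ y in Ioi (0 : ℝ), (u y) ^ 2 * y ^ p with hI
  -- the auxiliary functions
  set g : ℝ → ℝ := fun y => (u y) ^ 2 * y ^ p with hg
  set h : ℝ → ℝ := fun x => (u x) ^ 2 * (2 * x) ^ p with hhdef
  set f : ℝ → ℝ := fun y => (u (y / 2)) ^ 2 * y ^ p with hf
  have hfh : ∀ y : ℝ, f y = h (2⁻¹ * y) := by
    intro y
    simp only [hf, hhdef]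
    rw [show (2:ℝ)⁻¹ * y = y / 2 by ring, show (2:ℝ) * (y / 2) = y by ring]
  -- integrability of h and its integral
  have hh_int : IntegrableOn h (Ioi 0) := by
    have : IntegrableOn (fun x => (2:ℝ) ^ p * ((u x) ^ 2 * x ^ p)) (Ioi 0) :=
      (hu.const_mul _)
    refine this.congr_fun (fun x hx => ?_) measurableSet_Ioi
    simp only [hhdef]
    rw [Real.mul_rpow (by norm_num) (le_of_lt hx)]
    ring
  have hh_val : ∫ x in Ioi (0:ℝ), h x = 2 ^ p * I := by
    rw [hI, ← integral_const_mul]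
    refine setIntegral_congr_fun measurableSet_Ioi (fun x hx => ?_)
    simp only [hhdef]
    rw [Real.mul_rpow (by norm_num) (le_of_lt hx)]
    ring
  -- integrability of f and its integral, by substitution
  have hf_int : IntegrableOn f (Ioi 0) := by
    have := (integrableOn_Ioi_comp_mul_left_iff h 0 (a := 2⁻¹) (by norm_num)).mpr
      (by simpa using hh_int)
    refine this.congr_fun (fun y _ => (hfh y).symm) measurableSet_Ioi
  have hf_val : ∫ y in Ioi (0:ℝ), f y = 2 ^ (p + 1) * I := by
    have := integral_comp_mul_left_Ioi h 0 (b := 2⁻¹) (by norm_num)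
    simp only [mul_zero, smul_eq_mul, inv_inv] at this
    calc ∫ y in Ioi (0:ℝ), f y = ∫ y in Ioi (0:ℝ), h (2⁻¹ * y) :=
          setIntegral_congr_fun measurableSet_Ioi (fun y _ => hfh y)
      _ = 2 * ∫ x in Ioi (0:ℝ), h x := this
      _ = 2 ^ (p + 1) * I := by
          rw [hh_val, Real.rpow_add (by norm_num), Real.rpow_one]; ring
  -- measurability of the cross term
  have hqmp : Measure.QuasiMeasurePreserving (fun y : ℝ => 2⁻¹ * y)
      (volume.restrict (Ioi 0)) (volume.restrict (Ioi 0)) := by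
    refine ⟨measurable_const_mul _, ?_⟩
    have hpre : ((2:ℝ)⁻¹ * ·) ⁻¹' (Ioi (0:ℝ)) = Ioi 0 := by
      rw [preimage_const_mul_Ioi₀ _ (by norm_num : (0:ℝ) < 2⁻¹)]
      norm_num
    have : Measure.map (fun y : ℝ => 2⁻¹ * y) (volume.restrict (Ioi 0)) =
        (Measure.map ((2:ℝ)⁻¹ * ·) volume).restrict (Ioi 0) := by
      rw [Measure.restrict_map (measurable_const_mul _) measurableSet_Ioi, hpre]
    rw [this, Real.map_volume_mul_left (by norm_num : (2:ℝ)⁻¹ ≠ 0),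
      Measure.restrict_smul]
    exact Measure.smul_absolutelyContinuous
  have huhalf : AEMeasurable (fun y => u (y / 2)) (volume.restrict (Ioi 0)) := by
    have := humeas.comp_quasiMeasurePreserving hqmp
    refine this.congr (Filter.Eventually.of_forall fun y => ?_)
    simp [Function.comp]; ring_nf
  have hprod_meas : AEStronglyMeasurable (fun y => u (y / 2) * u y * y ^ p)
      (volume.restrict (Ioi 0)) :=
    (((huhalf.mul humeas).mul (measurable_id.pow_const p).aemeasurable)).aestronglyMeasurable
  -- the pointwise bound
  set b : ℝ → ℝ := fun y => (t / 2) * f y + (1 / (2 * t)) * g y with hb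
  have hb_int : IntegrableOn b (Ioi 0) := (hf_int.const_mul _).add (hu.const_mul _)
  have hptwise : ∀ y ∈ Ioi (0:ℝ), |u (y / 2) * u y * y ^ p| ≤ b y := by
    intro y hy
    have hyp : (0:ℝ) ≤ y ^ p := Real.rpow_nonneg (le_of_lt hy) _
    have key : |u (y / 2) * u y| ≤ (t / 2) * (u (y / 2)) ^ 2 + (1 / (2 * t)) * (u y) ^ 2 := by
      have hRHS : (t / 2) * (u (y / 2)) ^ 2 + (1 / (2 * t)) * (u y) ^ 2 =
          (t ^ 2 * (u (y / 2)) ^ 2 + (u y) ^ 2) / (2 * t) := by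
        field_simp
      rw [hRHS, le_div_iff₀ (by positivity)]
      rcases abs_cases (u (y / 2) * u y) with ⟨he, _⟩ | ⟨he, _⟩ <;> rw [he] <;>
        nlinarith [sq_nonneg (t * u (y / 2) - u y), sq_nonneg (t * u (y / 2) + u y)]
    calc |u (y / 2) * u y * y ^ p| = |u (y / 2) * u y| * y ^ p := by
          rw [abs_mul, abs_of_nonneg hyp]
      _ ≤ ((t / 2) * (u (y / 2)) ^ 2 + (1 / (2 * t)) * (u y) ^ 2) * y ^ p :=
          mul_le_mul_of_nonneg_right key hyp
      _ = b y := by simp only [hb, hf, hg]; ring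
  -- integrability of the cross term
  have hprod_int : IntegrableOn (fun y => u (y / 2) * u y * y ^ p) (Ioi 0) := by
    refine Integrable.mono' hb_int hprod_meas ?_
    exact (ae_restrict_iff' measurableSet_Ioi).mpr (Filter.Eventually.of_forall hptwise)
  -- integral of b
  have h2x : (2:ℝ) ^ (-((p + 1) / 2)) * 2 ^ ((p + 1) / 2) = 1 := by
    rw [← Real.rpow_add (by norm_num : (0:ℝ) < 2), show -((p+1)/2) + (p+1)/2 = 0 by ring,
      Real.rpow_zero]
  have hcoef1 : t / 2 * 2 ^ (p + 1) = c / 2 := by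
    rw [htdef, hc, div_mul_eq_mul_div, ← Real.rpow_add (by norm_num : (0:ℝ) < 2),
      show -((p+1)/2) + (p+1) = (p+1)/2 by ring]
  have hcoef2 : 1 / (2 * t) = c / 2 := by
    rw [htdef, hc, div_eq_div_iff (by positivity) (by norm_num : (2:ℝ) ≠ 0)]
    linear_combination (-2 : ℝ) * h2x
  have hb_val : ∫ y in Ioi (0:ℝ), b y = c * I := by
    rw [hb, integral_add (hf_int.const_mul _) (hu.const_mul _),
      integral_const_mul, integral_const_mul]
    have : ∫ y in Ioi (0:ℝ), g y = I := rfl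
    rw [this, hf_val, ← mul_assoc, hcoef1, hcoef2]; ring
  -- conclude
  have hJ : ∫ y in Ioi (0:ℝ), u (y / 2) * u y * y ^ p ≤ c * I := by
    rw [← hb_val]
    refine setIntegral_mono_on hprod_int hb_int measurableSet_Ioi (fun y hy => ?_)
    exact le_trans (le_abs_self _) (hptwise y hy)
  have hexp : (4 - c) * I = 4 * I - c * I := by ring
  linarith
end

section
/- Let p > 3 and u ∈ L²(ℝ₊, x^p dx). Then ∫₀^∞ u(x)² x^p dx − 4 ∫₀^∞ u(2x) u(x) x^p dx ≥ (1 − 2^{(3−p)/2}) ∫₀^∞ u(x)² x^p dx, and in particular the bilinear form b(u,v) = −4 ∫₀^∞ u(2x) v(x) x^p dx + ∫₀^∞ u(x) v(x) x^p dx is coercive on L²(ℝ₊, x^p dx) with coercivity constant 1 − 2^{(3−p)/2} > 0. -/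
open MeasureTheory Set

lemma qmp_two : Measure.QuasiMeasurePreserving (fun x : ℝ => 2 * x)
    (volume.restrict (Ioi 0)) (volume.restrict (Ioi 0)) := by
  refine ⟨(measurable_const_mul 2), ?_⟩
  have hmeq : Measure.map (fun x : ℝ => 2 * x) (volume.restrict (Ioi 0)) =
      (Measure.map (fun x : ℝ => 2 * x) volume).restrict (Ioi 0) := by
    rw [Measure.restrict_map (measurable_const_mul 2) measurableSet_Ioi]
    congr 1
    rw [preimage_const_mul_Ioi₀ _ (by norm_num : (0:ℝ) < 2)]
    norm_num
  rw [hmeq, Real.map_volume_mul_left (by norm_num : (2:ℝ) ≠ 0),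
    Measure.restrict_smul]
  exact Measure.smul_absolutelyContinuous

/-- Coercivity of the bilinear form `b(u,v) = −4∫u(2x) v(x) xᵖ + ∫u v xᵖ` on
`L²(ℝ₊, xᵖ dx)` for `p > 3`, with coercivity constant `1 − 2^((3−p)/2) > 0`. -/
theorem coercivity_strategy_two (p : ℝ) (hp : 3 < p) (u : ℝ → ℝ)
    (humeas : AEMeasurable u (volume.restrict (Ioi 0)))
    (hu : IntegrableOn (fun x => (u x) ^ 2 * x ^ p) (Ioi 0)) :
    (0 : ℝ) < 1 - 2 ^ ((3 - p) / 2) ∧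
      (1 - 2 ^ ((3 - p) / 2)) * ∫ x in Ioi (0 : ℝ), (u x) ^ 2 * x ^ p ≤
        (∫ x in Ioi (0 : ℝ), (u x) ^ 2 * x ^ p) -
          4 * ∫ x in Ioi (0 : ℝ), u (2 * x) * u x * x ^ p := by
  have hconst : (2:ℝ) ^ ((3 - p) / 2) < 1 :=
    Real.rpow_lt_one_of_one_lt_of_neg (by norm_num) (by linarith)
  refine ⟨by linarith, ?_⟩
  set I := ∫ x in Ioi (0 : ℝ), (u x) ^ 2 * x ^ p with hI
  have hI0 : 0 ≤ I := by
    apply setIntegral_nonneg measurableSet_Ioi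
    intro x hx
    exact mul_nonneg (sq_nonneg _) (Real.rpow_nonneg (le_of_lt hx) _)
  -- change of variables
  set g : ℝ → ℝ := fun y => (u y) ^ 2 * y ^ p with hg
  have h2int : IntegrableOn (fun x => g (2 * x)) (Ioi 0) :=
    (integrableOn_Ioi_comp_mul_left_iff g 0 (by norm_num : (0:ℝ) < 2)).mpr (by simpa using hu)
  have h2val : ∫ x in Ioi (0:ℝ), g (2 * x) = 2⁻¹ * I := by
    rw [integral_comp_mul_left_Ioi g 0 (by norm_num : (0:ℝ) < 2), mul_zero]
    simp [hI]
  -- rewrite g (2x)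
  have hae : ∀ᵐ x ∂(volume.restrict (Ioi (0:ℝ))), x ∈ Ioi (0:ℝ) :=
    ae_restrict_mem measurableSet_Ioi
  have hgx : ∀ x ∈ Ioi (0:ℝ), (2:ℝ) ^ (-p) * g (2 * x) = (u (2 * x)) ^ 2 * x ^ p := by
    intro x hx
    simp only [hg]
    rw [Real.mul_rpow (by norm_num) (le_of_lt hx)]
    rw [show (2:ℝ)^(-p) * ((u (2*x))^2 * ((2:ℝ)^p * x^p))
        = ((2:ℝ)^(-p) * (2:ℝ)^p) * ((u (2*x))^2 * x^p) by ring,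
      ← Real.rpow_add (by norm_num) (-p) p]
    norm_num
  have hAint : IntegrableOn (fun x => (u (2 * x)) ^ 2 * x ^ p) (Ioi 0) := by
    apply (h2int.const_mul ((2:ℝ) ^ (-p))).congr
    filter_upwards [hae] with x hx using hgx x hx
  have hAval : ∫ x in Ioi (0:ℝ), (u (2 * x)) ^ 2 * x ^ p
      = (2:ℝ) ^ (-p) * (2⁻¹ * I) := by
    rw [← h2val, ← integral_const_mul]
    apply setIntegral_congr_fun measurableSet_Ioi
    intro x hx
    exact (hgx x hx).symm
  -- AM-GM with weight t
  set t : ℝ := (2:ℝ) ^ ((p + 1) / 2) with ht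
  have ht0 : 0 < t := Real.rpow_pos_of_pos (by norm_num) _
  have hbound : ∀ x ∈ Ioi (0:ℝ), |u (2 * x) * u x * x ^ p|
      ≤ (t / 2) * ((u (2 * x)) ^ 2 * x ^ p) + (1 / (2 * t)) * ((u x) ^ 2 * x ^ p) := by
    intro x hx
    have hxp : (0:ℝ) ≤ x ^ p := Real.rpow_nonneg (le_of_lt hx) _
    rw [abs_mul, abs_of_nonneg hxp]
    have key : |u (2 * x) * u x| ≤ (t / 2) * (u (2 * x)) ^ 2 + (1 / (2 * t)) * (u x) ^ 2 := by
      rw [abs_mul]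
      have key' : 2 * t * (|u (2 * x)| * |u x|) ≤ t ^ 2 * (u (2 * x)) ^ 2 + (u x) ^ 2 := by
        have h1 : 0 ≤ (t * |u (2 * x)| - |u x|) ^ 2 := sq_nonneg _
        have h2 : |u (2*x)|^2 = (u (2*x))^2 := sq_abs _
        have h3 : |u x|^2 = (u x)^2 := sq_abs _
        nlinarith
      have heq : (t / 2) * (u (2 * x)) ^ 2 + (1 / (2 * t)) * (u x) ^ 2
          = (t ^ 2 * (u (2 * x)) ^ 2 + (u x) ^ 2) / (2 * t) := by
        field_simp
      rw [heq, le_div_iff₀ (by positivity : (0:ℝ) < 2 * t)]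
      linarith
    nlinarith [mul_le_mul_of_nonneg_right key hxp]
  -- integrability of h
  have hmeas2 : AEMeasurable (fun x => u (2 * x)) (volume.restrict (Ioi (0:ℝ))) :=
    humeas.comp_quasiMeasurePreserving qmp_two
  have hmeash : AEStronglyMeasurable (fun x => u (2 * x) * u x * x ^ p)
      (volume.restrict (Ioi (0:ℝ))) :=
    ((hmeas2.mul humeas).mul ((show Measurable (fun x : ℝ => x ^ p) by measurability).aemeasurable)).aestronglyMeasurable
  have hBint : IntegrableOn (fun x => (t / 2) * ((u (2 * x)) ^ 2 * x ^ p)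
      + (1 / (2 * t)) * ((u x) ^ 2 * x ^ p)) (Ioi 0) :=
    (hAint.const_mul _).add (hu.const_mul _)
  have hhint : IntegrableOn (fun x => u (2 * x) * u x * x ^ p) (Ioi 0) := by
    apply Integrable.mono' hBint hmeash
    filter_upwards [hae] with x hx
    rw [Real.norm_eq_abs]
    exact hbound x hx
  -- the estimate
  have hJ : ∫ x in Ioi (0:ℝ), u (2 * x) * u x * x ^ p
      ≤ (t / 2) * ((2:ℝ) ^ (-p) * (2⁻¹ * I)) + (1 / (2 * t)) * I := by
    rw [← hAval, hI, ← integral_const_mul, ← integral_const_mul, ← integral_add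
      (hAint.const_mul _) (hu.const_mul _)]
    apply setIntegral_mono_on hhint hBint measurableSet_Ioi
    intro x hx
    exact (le_abs_self _).trans (hbound x hx)
  have ht' : t ≠ 0 := ne_of_gt ht0
  have e1 : t * (2:ℝ) ^ (-p) = (2:ℝ) ^ ((1 - p) / 2) := by
    rw [ht, ← Real.rpow_add (by norm_num)]; ring_nf
  have e2 : (1:ℝ) / t = (2:ℝ) ^ (-((p + 1) / 2)) := by
    rw [ht, Real.rpow_neg (by norm_num : (0:ℝ) ≤ 2), one_div]
  have e3 : (2:ℝ) ^ ((1 - p) / 2) = 2 * (2:ℝ) ^ (-((p+1)/2)) := by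
    rw [show (1-p)/2 = 1 + (-((p+1)/2)) by ring,
      Real.rpow_add (by norm_num : (0:ℝ) < 2), Real.rpow_one]
  have h24 : (2:ℝ) ^ (2:ℝ) = 4 := by
    rw [show (2:ℝ) = ((2:ℕ):ℝ) from by norm_num, Real.rpow_natCast]
    norm_num
  have e4 : (2:ℝ) ^ ((3 - p) / 2) = 4 * (2:ℝ) ^ (-((p+1)/2)) := by
    rw [show (3-p)/2 = 2 + (-((p+1)/2)) by ring,
      Real.rpow_add (by norm_num : (0:ℝ) < 2), h24]
  have hcomp : 4 * ((t / 2) * ((2:ℝ) ^ (-p) * (2⁻¹ * I)) + (1 / (2 * t)) * I)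
      = (2:ℝ) ^ ((3 - p) / 2) * I := by
    calc 4 * ((t / 2) * ((2:ℝ) ^ (-p) * (2⁻¹ * I)) + (1 / (2 * t)) * I)
        = (t * (2:ℝ) ^ (-p)) * I + 2 * ((1:ℝ)/t) * I := by field_simp; ring
      _ = (2:ℝ) ^ ((3 - p) / 2) * I := by rw [e1, e2, e3, e4]; ring
  have hfinal : 4 * ∫ x in Ioi (0:ℝ), u (2 * x) * u x * x ^ p
      ≤ (2:ℝ) ^ ((3 - p) / 2) * I := by
    rw [← hcomp]
    linarith [hJ]
  linarith
end

section
/- Let L ∈ L²(ℝ₊, dx) ∩ L²(ℝ₊, x⁴ dx) and suppose there exists H ∈ L²(ℝ₊, dx) ∩ L²(ℝ₊, x⁴ dx) with 4 H(2x) − H(x) = L(x) for a.e. x > 0. Then H⁽¹⁾ = H⁽²⁾ almost everywhere on (0,∞), i.e., Σ_{n=1}^∞ 2^{-2n} L(2^{-n} x) = −Σ_{n=0}^∞ 2^{2n} L(2^n x) for a.e. x > 0; equivalently, the two-sided sum Σ_{n∈ℤ} 2^{2n} L(2^n x) vanishes for a.e. x > 0. -/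
open MeasureTheory Set

open Filter


private lemma amgm1 (u : ℝ) : |u| ≤ (1 + u^2)/2 := by
  nlinarith [sq_nonneg (1 - |u|), sq_abs u, abs_nonneg u]

private lemma amgm2 {t w : ℝ} (ht : 0 < t) (hw : 0 < w) (u : ℝ) :
    |u| ≤ (t * w⁻¹ + t⁻¹ * (u^2 * w))/2 := by
  have h : |u| ≤ (t^2 + w^2*u^2)/(2*t*w) := by
    rw [le_div_iff₀ (by positivity)]
    nlinarith [sq_nonneg (t - w*|u|), sq_abs u, abs_nonneg u]
  calc |u| ≤ (t^2 + w^2*u^2)/(2*t*w) := h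
    _ = (t * w⁻¹ + t⁻¹ * (u^2 * w))/2 := by field_simp

private lemma qmp_scale {c : ℝ} (hc : 0 < c) {s : Set ℝ} (hs : MeasurableSet s)
    (hsub : s ⊆ Ioi 0) :
    Measure.QuasiMeasurePreserving (fun x => c * x) (volume.restrict s)
      (volume.restrict (Ioi 0)) := by
  refine ⟨measurable_const_mul c, Measure.AbsolutelyContinuous.mk fun A hA h0 => ?_⟩
  rw [Measure.restrict_apply hA] at h0
  rw [Measure.map_apply (measurable_const_mul c) hA,
    Measure.restrict_apply (hA.preimage (measurable_const_mul c))]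
  refine measure_mono_null (fun x hx => ?_)
    (?_ : volume ((fun x => c*x) ⁻¹' (A ∩ Ioi 0)) = 0)
  · exact ⟨hx.1, mul_pos hc (hsub hx.2)⟩
  · rw [Real.volume_preimage_mul_left hc.ne', h0, mul_zero]

private lemma map_scale_restrict {c : ℝ} (hc : 0 < c) :
    Measure.map (fun x => c * x) (volume.restrict (Ioi (0:ℝ)))
      = ENNReal.ofReal c⁻¹ • volume.restrict (Ioi (0:ℝ)) := by
  have hpre : (fun x => c * x) ⁻¹' (Ioi (0:ℝ)) = Ioi 0 := by
    ext x
    simp only [mem_preimage, mem_Ioi]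
    constructor
    · intro h; by_contra hx; push_neg at hx; nlinarith
    · intro h; exact mul_pos hc h
  calc Measure.map (fun x => c*x) (volume.restrict (Ioi 0))
      = Measure.map (fun x => c*x) (volume.restrict ((fun x => c*x) ⁻¹' (Ioi 0))) := by
        rw [hpre]
    _ = (Measure.map (fun x => c*x) volume).restrict (Ioi 0) :=
        (Measure.restrict_map (measurable_const_mul c) measurableSet_Ioi).symm
    _ = (ENNReal.ofReal |c⁻¹| • volume).restrict (Ioi 0) := by
        rw [Real.map_volume_mul_left hc.ne']
    _ = ENNReal.ofReal c⁻¹ • volume.restrict (Ioi 0) := by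
        rw [Measure.restrict_smul, abs_of_pos (inv_pos.2 hc)]

private lemma lintegral_scale (g : ℝ → ENNReal)
    (hg : AEMeasurable g (volume.restrict (Ioi (0:ℝ)))) {c : ℝ} (hc : 0 < c) :
    ∫⁻ x in Ioi (0:ℝ), g (c * x) = ENNReal.ofReal c⁻¹ * ∫⁻ y in Ioi (0:ℝ), g y := by
  have hg' : AEMeasurable g (Measure.map (fun x => c*x) (volume.restrict (Ioi (0:ℝ)))) := by
    rw [map_scale_restrict hc]; exact hg.smul_measure _
  rw [← lintegral_map' hg' (measurable_const_mul c).aemeasurable, map_scale_restrict hc,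
    lintegral_smul_measure, smul_eq_mul]

private lemma lint_ofReal_lt_top {s : Set ℝ} {f : ℝ → ℝ} (hf : IntegrableOn f s) :
    ∫⁻ x in s, ENNReal.ofReal (f x) < ⊤ :=
  lt_of_le_of_lt (lintegral_mono fun x => Real.ofReal_le_enorm (f x)) hf.2

private lemma lint_sq_scale (f : ℝ → ℝ) (hf : AEMeasurable f (volume.restrict (Ioi (0:ℝ))))
    {c : ℝ} (hc : 0 < c) :
    ∫⁻ x in Ioi (0:ℝ), ENNReal.ofReal ((f (c*x))^2)
      = ENNReal.ofReal c⁻¹ * ∫⁻ y in Ioi (0:ℝ), ENNReal.ofReal ((f y)^2) :=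
  lintegral_scale (fun y => ENNReal.ofReal ((f y)^2)) ((hf.pow_const 2).ennreal_ofReal) hc

private lemma lint_sq4_scale (f : ℝ → ℝ) (hf : AEMeasurable f (volume.restrict (Ioi (0:ℝ))))
    {c : ℝ} (hc : 0 < c) :
    ∫⁻ x in Ioi (0:ℝ), ENNReal.ofReal ((f (c*x))^2 * x^4)
      = ENNReal.ofReal ((c^4)⁻¹ * c⁻¹) * ∫⁻ y in Ioi (0:ℝ), ENNReal.ofReal ((f y)^2 * y^4) := by
  have hc' : c ≠ 0 := hc.ne'
  have hpt : ∀ x : ℝ, ENNReal.ofReal ((f (c*x))^2 * x^4)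
      = ENNReal.ofReal ((c^4)⁻¹) * ENNReal.ofReal ((f (c*x))^2 * (c*x)^4) := by
    intro x
    rw [← ENNReal.ofReal_mul (by positivity)]
    congr 1
    field_simp
  simp_rw [hpt]
  rw [lintegral_const_mul' _ _ ENNReal.ofReal_ne_top,
    lintegral_scale (fun y => ENNReal.ofReal ((f y)^2 * y^4))
      (((hf.pow_const 2).mul ((aemeasurable_id.pow_const 4))).ennreal_ofReal) hc,
    ← mul_assoc, ← ENNReal.ofReal_mul (by positivity)]

private lemma geom_ne_top {q : ℝ} (h0 : 0 ≤ q) (h1 : q < 1) {K : ENNReal} (hK : K ≠ ⊤) :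
    ∑' n : ℕ, ENNReal.ofReal (q^n) * K ≠ ⊤ := by
  rw [ENNReal.tsum_mul_right]
  refine ENNReal.mul_ne_top ?_ hK
  rw [← ENNReal.ofReal_tsum_of_nonneg (fun n => pow_nonneg h0 n)
    (summable_geometric_of_lt_one h0 h1)]
  exact ENNReal.ofReal_ne_top

private lemma ae_summable_of_tsum_lintegral {μ : Measure ℝ} (g : ℕ → ℝ → ℝ)
    (hmeas : ∀ n, AEMeasurable (g n) μ)
    (hfin : ∑' n : ℕ, ∫⁻ x, ‖g n x‖₊ ∂μ ≠ ⊤) :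
    ∀ᵐ x ∂μ, Summable (fun n => g n x) := by
  have h0 : ∀ n, AEMeasurable (fun x => (‖g n x‖₊ : ENNReal)) μ := fun n =>
    (hmeas n).nnnorm.coe_nnreal_ennreal
  have h1 : ∫⁻ x, (∑' n, (‖g n x‖₊ : ENNReal)) ∂μ ≠ ⊤ := by
    rw [lintegral_tsum h0]; exact hfin
  have h2 := ae_lt_top' (AEMeasurable.ennreal_tsum h0) h1
  filter_upwards [h2] with x hx
  exact Summable.of_nnnorm (ENNReal.tsum_coe_ne_top_iff_summable.1 hx.ne)

private lemma boundA (f : ℝ → ℝ) (hf : AEMeasurable f (volume.restrict (Ioi (0:ℝ))))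
    {c r : ℝ} (hc : 0 < c) (hr : 0 ≤ r) {s : Set ℝ} (hsub : s ⊆ Ioi 0) :
    ∫⁻ x in s, ‖r * f (c*x)‖₊ ∂volume
      ≤ ENNReal.ofReal (r/2) * volume s
        + ENNReal.ofReal (r/2 * c⁻¹) * ∫⁻ y in Ioi (0:ℝ), ENNReal.ofReal ((f y)^2) := by
  have hpt : ∀ x : ℝ, ((‖r * f (c*x)‖₊ : ENNReal))
      ≤ ENNReal.ofReal (r/2) * (1 + ENNReal.ofReal ((f (c*x))^2)) := by
    intro x
    rw [← enorm_eq_nnnorm, Real.enorm_eq_ofReal_abs, ← ENNReal.ofReal_one,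
      ← ENNReal.ofReal_add (by norm_num) (by positivity),
      ← ENNReal.ofReal_mul (by positivity)]
    apply ENNReal.ofReal_le_ofReal
    rw [abs_mul, abs_of_nonneg hr]
    have h := mul_le_mul_of_nonneg_left (amgm1 (f (c*x))) hr
    nlinarith
  calc ∫⁻ x in s, ‖r * f (c*x)‖₊
      ≤ ∫⁻ x in s, ENNReal.ofReal (r/2) * (1 + ENNReal.ofReal ((f (c*x))^2)) :=
        lintegral_mono hpt
    _ = ENNReal.ofReal (r/2) * ∫⁻ x in s, (1 + ENNReal.ofReal ((f (c*x))^2)) :=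
        lintegral_const_mul' _ _ ENNReal.ofReal_ne_top
    _ = ENNReal.ofReal (r/2) * (volume s + ∫⁻ x in s, ENNReal.ofReal ((f (c*x))^2)) := by
        rw [lintegral_add_left measurable_const, lintegral_one, Measure.restrict_apply_univ]
    _ ≤ ENNReal.ofReal (r/2) * (volume s + ∫⁻ x in Ioi 0, ENNReal.ofReal ((f (c*x))^2)) := by
        gcongr
    _ = ENNReal.ofReal (r/2) * volume s
        + ENNReal.ofReal (r/2 * c⁻¹) * ∫⁻ y in Ioi (0:ℝ), ENNReal.ofReal ((f y)^2) := by
        rw [lint_sq_scale f hf hc, mul_add, ← mul_assoc, ← ENNReal.ofReal_mul (by positivity)]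

private lemma boundB (f : ℝ → ℝ) (hf : AEMeasurable f (volume.restrict (Ioi (0:ℝ))))
    {c r t : ℝ} (hc : 0 < c) (hr : 0 ≤ r) (ht : 0 < t) {ε R : ℝ} (hε : 0 < ε) :
    ∫⁻ x in Ioo ε R, ‖r * f (c*x)‖₊ ∂volume
      ≤ ENNReal.ofReal (r*t/2) * (∫⁻ x in Ioi ε, ENNReal.ofReal ((x^4)⁻¹))
        + ENNReal.ofReal (r/(2*t) * ((c^4)⁻¹ * c⁻¹))
            * ∫⁻ y in Ioi (0:ℝ), ENNReal.ofReal ((f y)^2 * y^4) := by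
  have hsub : Ioo ε R ⊆ Ioi 0 := fun x hx => lt_trans hε hx.1
  have hpt : ∀ᵐ x ∂volume.restrict (Ioo ε R), ((‖r * f (c*x)‖₊ : ENNReal))
      ≤ ENNReal.ofReal (r*t/2) * ENNReal.ofReal ((x^4)⁻¹)
        + ENNReal.ofReal (r/(2*t)) * ENNReal.ofReal ((f (c*x))^2 * x^4) := by
    filter_upwards [ae_restrict_mem measurableSet_Ioo] with x hx
    have hx0 : (0:ℝ) < x := lt_trans hε hx.1
    have key := amgm2 ht (by positivity : (0:ℝ) < x^4) (f (c*x))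
    rw [← enorm_eq_nnnorm, Real.enorm_eq_ofReal_abs, ← ENNReal.ofReal_mul (by positivity),
      ← ENNReal.ofReal_mul (by positivity),
      ← ENNReal.ofReal_add (by positivity) (by positivity)]
    apply ENNReal.ofReal_le_ofReal
    rw [abs_mul, abs_of_nonneg hr]
    calc r * |f (c*x)| ≤ r * ((t * (x^4)⁻¹ + t⁻¹ * ((f (c*x))^2 * x^4))/2) :=
          mul_le_mul_of_nonneg_left key hr
      _ = r*t/2 * (x^4)⁻¹ + r/(2*t) * ((f (c*x))^2 * x^4) := by
          field_simp
  calc ∫⁻ x in Ioo ε R, ‖r * f (c*x)‖₊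
      ≤ ∫⁻ x in Ioo ε R, (ENNReal.ofReal (r*t/2) * ENNReal.ofReal ((x^4)⁻¹)
          + ENNReal.ofReal (r/(2*t)) * ENNReal.ofReal ((f (c*x))^2 * x^4)) :=
        lintegral_mono_ae hpt
    _ = ENNReal.ofReal (r*t/2) * (∫⁻ x in Ioo ε R, ENNReal.ofReal ((x^4)⁻¹))
        + ENNReal.ofReal (r/(2*t)) * ∫⁻ x in Ioo ε R, ENNReal.ofReal ((f (c*x))^2 * x^4) := by
        rw [lintegral_add_left
          (f := fun x : ℝ => ENNReal.ofReal (r*t/2) * ENNReal.ofReal ((x^4)⁻¹))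
          (measurable_const.mul
          (((measurable_id'.pow_const 4).inv).ennreal_ofReal)),
          lintegral_const_mul' _ _ ENNReal.ofReal_ne_top,
          lintegral_const_mul' _ _ ENNReal.ofReal_ne_top]
    _ ≤ ENNReal.ofReal (r*t/2) * (∫⁻ x in Ioi ε, ENNReal.ofReal ((x^4)⁻¹))
        + ENNReal.ofReal (r/(2*t)) * ∫⁻ x in Ioi 0, ENNReal.ofReal ((f (c*x))^2 * x^4) := by
        gcongr
        · exact Ioo_subset_Ioi_self
    _ = ENNReal.ofReal (r*t/2) * (∫⁻ x in Ioi ε, ENNReal.ofReal ((x^4)⁻¹))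
        + ENNReal.ofReal (r/(2*t) * ((c^4)⁻¹ * c⁻¹))
            * ∫⁻ y in Ioi (0:ℝ), ENNReal.ofReal ((f y)^2 * y^4) := by
        rw [lint_sq4_scale f hf hc, ← mul_assoc, ← ENNReal.ofReal_mul (by positivity)]

private lemma two_zpow_mul (i j : ℤ) : (2:ℝ)^i * (2:ℝ)^j = (2:ℝ)^(i+j) :=
  (zpow_add₀ (two_ne_zero) i j).symm

private lemma two_zpow_le_half {i : ℤ} {n : ℕ} (h : i ≤ -(n:ℤ)) :
    (2:ℝ)^i ≤ (1/2:ℝ)^n := by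
  have e : (1/2:ℝ)^n = (2:ℝ)^(-(n:ℤ)) := by
    rw [one_div, inv_pow, ← zpow_natCast (2:ℝ) n, ← zpow_neg]
  rw [e]
  exact zpow_le_zpow_right₀ one_le_two h

private lemma cA1 (n : ℕ) : (2:ℝ)^(-2*(n:ℤ)-2)/2 ≤ (1/2:ℝ)^n := by
  rw [div_eq_mul_inv, ← zpow_neg_one (2:ℝ), two_zpow_mul]
  exact two_zpow_le_half (by omega)

private lemma cA2 (n : ℕ) :
    (2:ℝ)^(-2*(n:ℤ)-2)/2 * ((2:ℝ)^(-(n:ℤ)-1))⁻¹ ≤ (1/2:ℝ)^n := by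
  rw [div_eq_mul_inv, ← zpow_neg_one (2:ℝ), two_zpow_mul, ← zpow_neg, two_zpow_mul]
  exact two_zpow_le_half (by omega)

private lemma cA3 (n : ℕ) : (2:ℝ)^(-2*(n:ℤ))/2 ≤ (1/2:ℝ)^n := by
  rw [div_eq_mul_inv, ← zpow_neg_one (2:ℝ), two_zpow_mul]
  exact two_zpow_le_half (by omega)

private lemma cA4 (n : ℕ) :
    (2:ℝ)^(-2*(n:ℤ))/2 * ((2:ℝ)^(-(n:ℤ)))⁻¹ ≤ (1/2:ℝ)^n := by
  rw [div_eq_mul_inv, ← zpow_neg_one (2:ℝ), two_zpow_mul, ← zpow_neg, two_zpow_mul]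
  exact two_zpow_le_half (by omega)

private lemma econv3 (n : ℕ) : (2:ℝ)^(2*(n:ℤ)) = (4:ℝ)^n := by
  rw [show (2*(n:ℤ)) = ((2*n:ℕ):ℤ) by push_cast; ring, zpow_natCast, pow_mul]
  norm_num

private lemma econv4 (n : ℕ) : (2:ℝ)^((n:ℤ)) = (2:ℝ)^n := zpow_natCast 2 n

private lemma cB1 (n : ℕ) : (2:ℝ)^(2*(n:ℤ)) * (2*(3/16:ℝ)^n) / 2 ≤ (3/4:ℝ)^n := by
  rw [econv3]
  have : (4:ℝ)^n * (2*(3/16:ℝ)^n) / 2 = (3/4:ℝ)^n := by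
    have : (4:ℝ)^n * (2*(3/16:ℝ)^n) / 2 = (4:ℝ)^n * (3/16:ℝ)^n := by ring
    rw [this, ← mul_pow]
    norm_num
  exact le_of_eq this

private lemma cB2 (n : ℕ) :
    (2:ℝ)^(2*(n:ℤ)) / (2 * (2*(3/16:ℝ)^n)) * ((((2:ℝ)^((n:ℤ)))^4)⁻¹ * ((2:ℝ)^((n:ℤ)))⁻¹)
      ≤ (3/4:ℝ)^n := by
  rw [econv3, econv4]
  have h16 : ((2:ℝ)^n)^4 = (16:ℝ)^n := by
    rw [← pow_mul, mul_comm, pow_mul]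
    norm_num
  rw [h16]
  have hpos : (0:ℝ) < (3/16:ℝ)^n := by positivity
  have key : (4:ℝ)^n / (2 * (2*(3/16:ℝ)^n)) * (((16:ℝ)^n)⁻¹ * ((2:ℝ)^n)⁻¹)
      = (2/3:ℝ)^n / 4 := by
    rw [div_mul_eq_mul_div, div_eq_div_iff (by positivity) (by norm_num)]
    simp only [← inv_pow, ← mul_pow]
    ring_nf
    norm_num [← mul_pow]
  rw [key]
  calc (2/3:ℝ)^n / 4 ≤ (2/3:ℝ)^n := by
        have : (0:ℝ) ≤ (2/3:ℝ)^n := by positivity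
        linarith
    _ ≤ (3/4:ℝ)^n := pow_le_pow_left₀ (by norm_num) (by norm_num) n

private lemma pointwise_key (L H : ℝ → ℝ) (x : ℝ)
    (hrel : ∀ k : ℤ, 4 * H ((2:ℝ)^(k+1) * x) - H ((2:ℝ)^k * x) = L ((2:ℝ)^k * x))
    (hs1 : Summable (fun n : ℕ => (2:ℝ)^(-2*(n:ℤ)-2) * L ((2:ℝ)^(-(n:ℤ)-1) * x)))
    (hs2 : Summable (fun n : ℕ => (2:ℝ)^(2*(n:ℤ)) * L ((2:ℝ)^((n:ℤ)) * x)))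
    (ht1 : Tendsto (fun N : ℕ => (2:ℝ)^(-2*(N:ℤ)) * H ((2:ℝ)^(-(N:ℤ)) * x)) atTop (nhds 0))
    (ht2 : Tendsto (fun N : ℕ => (2:ℝ)^(2*(N:ℤ)) * H ((2:ℝ)^((N:ℤ)) * x)) atTop (nhds 0)) :
    (∑' n : ℕ, (2:ℝ)^(-2*(n:ℤ)-2) * L ((2:ℝ)^(-(n:ℤ)-1) * x))
      = -∑' n : ℕ, (2:ℝ)^(2*(n:ℤ)) * L ((2:ℝ)^((n:ℤ)) * x) := by
  have hp1 : ∀ N : ℕ, ∑ n ∈ Finset.range N, (2:ℝ)^(-2*(n:ℤ)-2) * L ((2:ℝ)^(-(n:ℤ)-1) * x)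
      = H x - (2:ℝ)^(-2*(N:ℤ)) * H ((2:ℝ)^(-(N:ℤ)) * x) := by
    intro N
    induction N with
    | zero => simp
    | succ N ih =>
      rw [Finset.sum_range_succ, ih, ← hrel (-(N:ℤ)-1),
        show (-(N:ℤ)-1) + 1 = -(N:ℤ) by ring,
        show (-2*((N+1:ℕ):ℤ)) = -2*(N:ℤ)-2 by push_cast; ring,
        show (-(((N+1):ℕ):ℤ)) = -(N:ℤ)-1 by push_cast; ring]
      have h2 : (2:ℝ)^(-2*(N:ℤ)-2) * 4 = (2:ℝ)^(-2*(N:ℤ)) := by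
        rw [show (-2*(N:ℤ)) = (-2*(N:ℤ)-2) + 2 by ring, ← two_zpow_mul]
        norm_num
      linear_combination (H ((2:ℝ)^(-(N:ℤ)) * x)) * h2
  have hp2 : ∀ N : ℕ, ∑ n ∈ Finset.range N, (2:ℝ)^(2*(n:ℤ)) * L ((2:ℝ)^((n:ℤ)) * x)
      = (2:ℝ)^(2*(N:ℤ)) * H ((2:ℝ)^((N:ℤ)) * x) - H x := by
    intro N
    induction N with
    | zero => simp
    | succ N ih =>
      rw [Finset.sum_range_succ, ih, ← hrel (N:ℤ),
        show ((((N+1):ℕ)):ℤ) = (N:ℤ)+1 by push_cast; ring,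
        show (2*((N:ℤ)+1)) = 2*(N:ℤ)+2 by ring]
      have h2 : (2:ℝ)^(2*(N:ℤ)) * 4 = (2:ℝ)^(2*(N:ℤ)+2) := by
        rw [show (2*(N:ℤ)+2) = (2*(N:ℤ)) + 2 by ring, ← two_zpow_mul]
        norm_num
      linear_combination (H ((2:ℝ)^((N:ℤ)+1) * x)) * h2
  have T1 : Tendsto (fun N : ℕ => ∑ n ∈ Finset.range N,
      (2:ℝ)^(-2*(n:ℤ)-2) * L ((2:ℝ)^(-(n:ℤ)-1) * x)) atTop (nhds (H x)) := by
    simp only [hp1]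
    simpa using tendsto_const_nhds.sub ht1
  have T2 : Tendsto (fun N : ℕ => ∑ n ∈ Finset.range N,
      (2:ℝ)^(2*(n:ℤ)) * L ((2:ℝ)^((n:ℤ)) * x)) atTop (nhds (-H x)) := by
    simp only [hp2]
    simpa using ht2.sub_const (H x)
  have e1 := tendsto_nhds_unique hs1.hasSum.tendsto_sum_nat T1
  have e2 := tendsto_nhds_unique hs2.hasSum.tendsto_sum_nat T2
  rw [e1, e2, neg_neg]

/-- If `L ∈ L²(ℝ₊, dx) ∩ L²(ℝ₊, x⁴ dx)` and the dilation equation `4 H(2x) − H(x) = L(x)`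
has a solution `H` in `L²(ℝ₊, dx) ∩ L²(ℝ₊, x⁴ dx)`, then the two series solutions
coincide: `Σ_{n=1}^∞ 2^{−2n} L(2^{−n} x) = −Σ_{n=0}^∞ 2^{2n} L(2^n x)` for a.e. `x > 0`;
equivalently the two-sided sum `Σ_{n∈ℤ} 2^{2n} L(2^n x)` vanishes a.e. -/
theorem Hone_eq_Htwo (L H : ℝ → ℝ)
    (hL0 : MemLp L 2 (volume.restrict (Ioi 0)))
    (hL4 : IntegrableOn (fun x => (L x) ^ 2 * x ^ 4) (Ioi 0))
    (hH0 : MemLp H 2 (volume.restrict (Ioi 0)))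
    (hH4 : IntegrableOn (fun x => (H x) ^ 2 * x ^ 4) (Ioi 0))
    (heq : ∀ᵐ x ∂(volume.restrict (Ioi (0 : ℝ))), 4 * H (2 * x) - H x = L x) :
    ∀ᵐ x ∂(volume.restrict (Ioi (0 : ℝ))),
      (∑' n : ℕ, (2 : ℝ) ^ (-(2 : ℝ) * ((n : ℝ) + 1)) * L ((2 : ℝ) ^ (-((n : ℝ) + 1)) * x))
        = -∑' n : ℕ, (2 : ℝ) ^ (2 * n) * L ((2 : ℝ) ^ n * x) := by
  have hLm : AEMeasurable L (volume.restrict (Ioi (0:ℝ))) :=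
    hL0.aestronglyMeasurable.aemeasurable
  have hHm : AEMeasurable H (volume.restrict (Ioi (0:ℝ))) :=
    hH0.aestronglyMeasurable.aemeasurable
  have hIL0 : (∫⁻ y in Ioi (0:ℝ), ENNReal.ofReal ((L y)^2)) ≠ ⊤ :=
    (lint_ofReal_lt_top hL0.integrable_sq).ne
  have hIL4 : (∫⁻ y in Ioi (0:ℝ), ENNReal.ofReal ((L y)^2 * y^4)) ≠ ⊤ :=
    (lint_ofReal_lt_top hL4).ne
  have hIH0 : (∫⁻ y in Ioi (0:ℝ), ENNReal.ofReal ((H y)^2)) ≠ ⊤ :=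
    (lint_ofReal_lt_top hH0.integrable_sq).ne
  have hIH4 : (∫⁻ y in Ioi (0:ℝ), ENNReal.ofReal ((H y)^2 * y^4)) ≠ ⊤ :=
    (lint_ofReal_lt_top hH4).ne
  have hrelAll : ∀ᵐ x ∂volume.restrict (Ioi (0:ℝ)), ∀ k : ℤ,
      4 * H ((2:ℝ)^(k+1) * x) - H ((2:ℝ)^k * x) = L ((2:ℝ)^k * x) := by
    rw [ae_all_iff]
    intro k
    have hq := qmp_scale (c := (2:ℝ)^k) (zpow_pos (by norm_num) k) measurableSet_Ioi
      (subset_refl _)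
    filter_upwards [hq.tendsto_ae.eventually heq] with x hx
    rw [show (2:ℝ)^(k+1) * x = 2 * ((2:ℝ)^k * x) by rw [← two_zpow_mul]; ring]
    exact hx
  set S : ℕ → Set ℝ := fun m => Ioo (((m:ℝ)+1)⁻¹) ((m:ℝ)+2) with hS
  have key : ∀ m : ℕ, ∀ᵐ x ∂volume.restrict (S m),
      (∑' n : ℕ, (2 : ℝ) ^ (-(2 : ℝ) * ((n : ℝ) + 1)) * L ((2 : ℝ) ^ (-((n : ℝ) + 1)) * x))
        = -∑' n : ℕ, (2 : ℝ) ^ (2 * n) * L ((2 : ℝ) ^ n * x) := by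
    intro m
    have hε : (0:ℝ) < ((m:ℝ)+1)⁻¹ := by positivity
    have hsubm : S m ⊆ Ioi 0 := fun y hy => lt_trans hε hy.1
    have hJ : (∫⁻ x in Ioi (((m:ℝ)+1)⁻¹), ENNReal.ofReal ((x^4)⁻¹)) ≠ ⊤ := by
      have hint : IntegrableOn (fun x : ℝ => x ^ (-4 : ℝ)) (Ioi (((m:ℝ)+1)⁻¹)) :=
        integrableOn_Ioi_rpow_of_lt (by norm_num) hε
      have hcong : (∫⁻ x in Ioi (((m:ℝ)+1)⁻¹), ENNReal.ofReal ((x^4)⁻¹))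
          = ∫⁻ x in Ioi (((m:ℝ)+1)⁻¹), ENNReal.ofReal (x ^ (-4:ℝ)) := by
        apply setLIntegral_congr_fun measurableSet_Ioi
        intro x hx
        have hx0 : (0:ℝ) < x := lt_trans hε hx
        beta_reduce
        rw [show (-4:ℝ) = -((4:ℕ):ℝ) by norm_num, Real.rpow_neg hx0.le, Real.rpow_natCast]
      rw [hcong]
      exact (lint_ofReal_lt_top hint).ne
    have hD : volume (S m) ≠ ⊤ := by
      show volume (Ioo _ _) ≠ ⊤
      rw [Real.volume_Ioo]
      exact ENNReal.ofReal_ne_top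
    have hmeasL : ∀ c : ℝ, 0 < c → AEMeasurable (fun x => L (c*x))
        (volume.restrict (S m)) := fun c hc =>
      hLm.comp_quasiMeasurePreserving (qmp_scale hc measurableSet_Ioo hsubm)
    have hmeasH : ∀ c : ℝ, 0 < c → AEMeasurable (fun x => H (c*x))
        (volume.restrict (S m)) := fun c hc =>
      hHm.comp_quasiMeasurePreserving (qmp_scale hc measurableSet_Ioo hsubm)
    have F1 : ∀ᵐ x ∂volume.restrict (S m),
        Summable (fun n : ℕ => (2:ℝ)^(-2*(n:ℤ)-2) * L ((2:ℝ)^(-(n:ℤ)-1) * x)) := by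
      refine ae_summable_of_tsum_lintegral _
        (fun n => (hmeasL _ (zpow_pos (by norm_num) _)).const_mul _) ?_
      refine ne_top_of_le_ne_top (geom_ne_top (q := 1/2) (by norm_num) (by norm_num)
        (ENNReal.add_ne_top.2 ⟨hD, hIL0⟩)) (ENNReal.tsum_le_tsum fun n => ?_)
      calc ∫⁻ x, ‖(2:ℝ)^(-2*(n:ℤ)-2) * L ((2:ℝ)^(-(n:ℤ)-1) * x)‖₊
            ∂volume.restrict (S m)
          ≤ ENNReal.ofReal ((2:ℝ)^(-2*(n:ℤ)-2)/2) * volume (S m)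
            + ENNReal.ofReal ((2:ℝ)^(-2*(n:ℤ)-2)/2 * ((2:ℝ)^(-(n:ℤ)-1))⁻¹)
              * ∫⁻ y in Ioi (0:ℝ), ENNReal.ofReal ((L y)^2) :=
          boundA L hLm (zpow_pos (by norm_num) _) (zpow_pos (by norm_num) _).le hsubm
        _ ≤ ENNReal.ofReal ((1/2:ℝ)^n) * volume (S m)
            + ENNReal.ofReal ((1/2:ℝ)^n) * ∫⁻ y in Ioi (0:ℝ), ENNReal.ofReal ((L y)^2) :=
          add_le_add (mul_le_mul_left (ENNReal.ofReal_le_ofReal (cA1 n)) _)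
            (mul_le_mul_left (ENNReal.ofReal_le_ofReal (cA2 n)) _)
        _ = ENNReal.ofReal ((1/2:ℝ)^n)
            * (volume (S m) + ∫⁻ y in Ioi (0:ℝ), ENNReal.ofReal ((L y)^2)) :=
          (mul_add _ _ _).symm
    have F3 : ∀ᵐ x ∂volume.restrict (S m),
        Summable (fun n : ℕ => (2:ℝ)^(-2*(n:ℤ)) * H ((2:ℝ)^(-(n:ℤ)) * x)) := by
      refine ae_summable_of_tsum_lintegral _
        (fun n => (hmeasH _ (zpow_pos (by norm_num) _)).const_mul _) ?_
      refine ne_top_of_le_ne_top (geom_ne_top (q := 1/2) (by norm_num) (by norm_num)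
        (ENNReal.add_ne_top.2 ⟨hD, hIH0⟩)) (ENNReal.tsum_le_tsum fun n => ?_)
      calc ∫⁻ x, ‖(2:ℝ)^(-2*(n:ℤ)) * H ((2:ℝ)^(-(n:ℤ)) * x)‖₊
            ∂volume.restrict (S m)
          ≤ ENNReal.ofReal ((2:ℝ)^(-2*(n:ℤ))/2) * volume (S m)
            + ENNReal.ofReal ((2:ℝ)^(-2*(n:ℤ))/2 * ((2:ℝ)^(-(n:ℤ)))⁻¹)
              * ∫⁻ y in Ioi (0:ℝ), ENNReal.ofReal ((H y)^2) :=
          boundA H hHm (zpow_pos (by norm_num) _) (zpow_pos (by norm_num) _).le hsubm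
        _ ≤ ENNReal.ofReal ((1/2:ℝ)^n) * volume (S m)
            + ENNReal.ofReal ((1/2:ℝ)^n) * ∫⁻ y in Ioi (0:ℝ), ENNReal.ofReal ((H y)^2) :=
          add_le_add (mul_le_mul_left (ENNReal.ofReal_le_ofReal (cA3 n)) _)
            (mul_le_mul_left (ENNReal.ofReal_le_ofReal (cA4 n)) _)
        _ = ENNReal.ofReal ((1/2:ℝ)^n)
            * (volume (S m) + ∫⁻ y in Ioi (0:ℝ), ENNReal.ofReal ((H y)^2)) :=
          (mul_add _ _ _).symm
    have F2 : ∀ᵐ x ∂volume.restrict (S m),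
        Summable (fun n : ℕ => (2:ℝ)^(2*(n:ℤ)) * L ((2:ℝ)^((n:ℤ)) * x)) := by
      refine ae_summable_of_tsum_lintegral _
        (fun n => (hmeasL _ (zpow_pos (by norm_num) _)).const_mul _) ?_
      refine ne_top_of_le_ne_top (geom_ne_top (q := 3/4) (by norm_num) (by norm_num)
        (ENNReal.add_ne_top.2 ⟨hJ, hIL4⟩)) (ENNReal.tsum_le_tsum fun n => ?_)
      calc ∫⁻ x, ‖(2:ℝ)^(2*(n:ℤ)) * L ((2:ℝ)^((n:ℤ)) * x)‖₊
            ∂volume.restrict (S m)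
          ≤ ENNReal.ofReal ((2:ℝ)^(2*(n:ℤ)) * (2*(3/16:ℝ)^n)/2)
              * (∫⁻ x in Ioi (((m:ℝ)+1)⁻¹), ENNReal.ofReal ((x^4)⁻¹))
            + ENNReal.ofReal ((2:ℝ)^(2*(n:ℤ)) / (2*(2*(3/16:ℝ)^n))
                * ((((2:ℝ)^((n:ℤ)))^4)⁻¹ * ((2:ℝ)^((n:ℤ)))⁻¹))
              * ∫⁻ y in Ioi (0:ℝ), ENNReal.ofReal ((L y)^2 * y^4) :=
          boundB L hLm (zpow_pos (by norm_num) _) (zpow_pos (by norm_num) _).le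
            (by positivity) hε
        _ ≤ ENNReal.ofReal ((3/4:ℝ)^n)
              * (∫⁻ x in Ioi (((m:ℝ)+1)⁻¹), ENNReal.ofReal ((x^4)⁻¹))
            + ENNReal.ofReal ((3/4:ℝ)^n)
              * ∫⁻ y in Ioi (0:ℝ), ENNReal.ofReal ((L y)^2 * y^4) :=
          add_le_add (mul_le_mul_left (ENNReal.ofReal_le_ofReal (cB1 n)) _)
            (mul_le_mul_left (ENNReal.ofReal_le_ofReal (cB2 n)) _)
        _ = ENNReal.ofReal ((3/4:ℝ)^n)
            * ((∫⁻ x in Ioi (((m:ℝ)+1)⁻¹), ENNReal.ofReal ((x^4)⁻¹))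
              + ∫⁻ y in Ioi (0:ℝ), ENNReal.ofReal ((L y)^2 * y^4)) :=
          (mul_add _ _ _).symm
    have F4 : ∀ᵐ x ∂volume.restrict (S m),
        Summable (fun n : ℕ => (2:ℝ)^(2*(n:ℤ)) * H ((2:ℝ)^((n:ℤ)) * x)) := by
      refine ae_summable_of_tsum_lintegral _
        (fun n => (hmeasH _ (zpow_pos (by norm_num) _)).const_mul _) ?_
      refine ne_top_of_le_ne_top (geom_ne_top (q := 3/4) (by norm_num) (by norm_num)
        (ENNReal.add_ne_top.2 ⟨hJ, hIH4⟩)) (ENNReal.tsum_le_tsum fun n => ?_)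
      calc ∫⁻ x, ‖(2:ℝ)^(2*(n:ℤ)) * H ((2:ℝ)^((n:ℤ)) * x)‖₊
            ∂volume.restrict (S m)
          ≤ ENNReal.ofReal ((2:ℝ)^(2*(n:ℤ)) * (2*(3/16:ℝ)^n)/2)
              * (∫⁻ x in Ioi (((m:ℝ)+1)⁻¹), ENNReal.ofReal ((x^4)⁻¹))
            + ENNReal.ofReal ((2:ℝ)^(2*(n:ℤ)) / (2*(2*(3/16:ℝ)^n))
                * ((((2:ℝ)^((n:ℤ)))^4)⁻¹ * ((2:ℝ)^((n:ℤ)))⁻¹))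
              * ∫⁻ y in Ioi (0:ℝ), ENNReal.ofReal ((H y)^2 * y^4) :=
          boundB H hHm (zpow_pos (by norm_num) _) (zpow_pos (by norm_num) _).le
            (by positivity) hε
        _ ≤ ENNReal.ofReal ((3/4:ℝ)^n)
              * (∫⁻ x in Ioi (((m:ℝ)+1)⁻¹), ENNReal.ofReal ((x^4)⁻¹))
            + ENNReal.ofReal ((3/4:ℝ)^n)
              * ∫⁻ y in Ioi (0:ℝ), ENNReal.ofReal ((H y)^2 * y^4) :=
          add_le_add (mul_le_mul_left (ENNReal.ofReal_le_ofReal (cB1 n)) _)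
            (mul_le_mul_left (ENNReal.ofReal_le_ofReal (cB2 n)) _)
        _ = ENNReal.ofReal ((3/4:ℝ)^n)
            * ((∫⁻ x in Ioi (((m:ℝ)+1)⁻¹), ENNReal.ofReal ((x^4)⁻¹))
              + ∫⁻ y in Ioi (0:ℝ), ENNReal.ofReal ((H y)^2 * y^4)) :=
          (mul_add _ _ _).symm
    have h0m := ae_restrict_of_ae_restrict_of_subset hsubm hrelAll
    filter_upwards [h0m, F1, F2, F3, F4] with x h0 h1 h2 h3 h4
    have keyx := pointwise_key L H x h0 h1 h2 h3.tendsto_atTop_zero h4.tendsto_atTop_zero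
    have g1 : ∀ n : ℕ, (2:ℝ)^(-(2:ℝ)*((n:ℝ)+1)) = (2:ℝ)^(-2*(n:ℤ)-2) := by
      intro n
      rw [show (-(2:ℝ)*((n:ℝ)+1)) = ((-2*(n:ℤ)-2 : ℤ):ℝ) by push_cast; ring,
        Real.rpow_intCast]
    have g2 : ∀ n : ℕ, (2:ℝ)^(-((n:ℝ)+1)) = (2:ℝ)^(-(n:ℤ)-1) := by
      intro n
      rw [show (-((n:ℝ)+1)) = ((-(n:ℤ)-1 : ℤ):ℝ) by push_cast; ring, Real.rpow_intCast]
    have g3 : ∀ n : ℕ, (2:ℝ)^(2*n) = (2:ℝ)^(2*(n:ℤ)) := by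
      intro n
      rw [show (2*(n:ℤ)) = ((2*n:ℕ):ℤ) by push_cast; ring, zpow_natCast]
    have g4 : ∀ n : ℕ, (2:ℝ)^(n:ℕ) = (2:ℝ)^((n:ℤ)) := fun n => (zpow_natCast 2 n).symm
    simp only [g1, g2, g3, g4]
    exact keyx
  have hcover : Ioi (0:ℝ) ⊆ ⋃ m, S m := by
    intro x hx
    obtain ⟨m, hm⟩ := exists_nat_gt (max x⁻¹ x)
    refine mem_iUnion.2 ⟨m, ?_, ?_⟩
    · have h1 : x⁻¹ < (m:ℝ)+1 :=
        lt_of_le_of_lt (le_max_left _ _) (hm.trans (lt_add_one _))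
      exact inv_lt_of_inv_lt₀ hx h1
    · have h2 : x < (m:ℝ) := lt_of_le_of_lt (le_max_right _ _) hm
      show x < (m:ℝ)+2
      have : (0:ℝ) ≤ 2 := by norm_num
      exact lt_of_lt_of_le h2 (le_add_of_nonneg_right this)
  exact ae_restrict_of_ae_restrict_of_subset hcover ((ae_restrict_iUnion_iff S _).2 key)
end

section
/- Let B : (0,∞) → ℝ be measurable and nonnegative, λ₀ ∈ ℝ, and let N : [0,∞) → ℝ be continuously differentiable with N(0) = 0, such that N, x N, x N' and x B(x) N(x) are integrable on (0,∞), x N(x) → 0 as x → ∞, ∫₀^∞ N(x) dx > 0, and N'(x) + (λ₀ + B(x)) N(x) = 4 B(2x) N(2x) for all x > 0. Then λ₀ = (∫₀^∞ N(x) dx) / (∫₀^∞ x N(x) dx). -/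
open MeasureTheory Set Filter

/-- The Malthus parameter of the cell-division eigenvalue problem satisfies
`λ₀ = (∫₀^∞ N)/(∫₀^∞ x N)`. -/
theorem malthus_parameter_formula (B : ℝ → ℝ)
    (hBmeas : AEMeasurable B (volume.restrict (Ioi 0)))
    (hBnonneg : ∀ x : ℝ, 0 < x → 0 ≤ B x)
    (lam0 : ℝ) (N N' : ℝ → ℝ)
    (hNderiv : ∀ x ∈ Ici (0 : ℝ), HasDerivWithinAt N (N' x) (Ici 0) x)
    (hN'cont : ContinuousOn N' (Ici 0))
    (hN0 : N 0 = 0)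
    (hNint : IntegrableOn N (Ioi 0))
    (hxNint : IntegrableOn (fun x => x * N x) (Ioi 0))
    (hxN'int : IntegrableOn (fun x => x * N' x) (Ioi 0))
    (hxBNint : IntegrableOn (fun x => x * (B x * N x)) (Ioi 0))
    (hNlim : Tendsto (fun x => x * N x) atTop (nhds 0))
    (hNpos : 0 < ∫ x in Ioi (0 : ℝ), N x)
    (heq : ∀ x : ℝ, 0 < x →
      N' x + (lam0 + B x) * N x = 4 * B (2 * x) * N (2 * x)) :
    lam0 = (∫ x in Ioi (0 : ℝ), N x) / ∫ x in Ioi (0 : ℝ), x * N x := by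
  set I := ∫ x in Ioi (0 : ℝ), N x with hI
  set J := ∫ x in Ioi (0 : ℝ), x * N x with hJ
  -- Step 1: integration by parts: ∫ (N + x N') = 0
  have hcontN : ContinuousOn N (Ici 0) := fun x hx => (hNderiv x hx).continuousWithinAt
  have hderiv : ∀ x ∈ Ioi (0 : ℝ), HasDerivAt (fun y => y * N y) (N x + x * N' x) x := by
    intro x hx
    have h1 : HasDerivAt N (N' x) x :=
      (hNderiv x (mem_Ici.mpr (le_of_lt hx))).hasDerivAt (Ici_mem_nhds hx)
    have := (hasDerivAt_id' x).mul h1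
    simp only [one_mul] at this; exact this
  have hparts : ∫ x in Ioi (0 : ℝ), (N x + x * N' x) = 0 - 0 * N 0 := by
    refine integral_Ioi_of_hasDerivAt_of_tendsto ?_ hderiv (hNint.add hxN'int) hNlim
    exact (continuousWithinAt_id.mul (hcontN 0 (by simp)))
  have hparts' : (∫ x in Ioi (0 : ℝ), x * N' x) = -I := by
    have := integral_add hNint hxN'int
    rw [hparts] at this
    simp only [zero_mul, zero_sub, neg_zero] at this
    linarith [this.symm]
  -- Step 2: change of variables
  set g : ℝ → ℝ := fun y => y * (B y * N y) with hg
  have hcov : (∫ x in Ioi (0 : ℝ), g (2 * x)) = 2⁻¹ * ∫ y in Ioi (0 : ℝ), g y := by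
    have := integral_comp_mul_left_Ioi g 0 (by norm_num : (0:ℝ) < 2)
    simpa using this
  -- Step 3: integrate the equation times x
  have hkey : (∫ x in Ioi (0 : ℝ), (x * N' x + lam0 * (x * N x) + x * (B x * N x)))
      = ∫ x in Ioi (0 : ℝ), 2 * g (2 * x) := by
    refine setIntegral_congr_fun measurableSet_Ioi (fun x hx => ?_)
    have h := heq x hx
    simp only [hg]
    linear_combination x * h
  have hrhs : (∫ x in Ioi (0 : ℝ), 2 * g (2 * x)) = ∫ y in Ioi (0 : ℝ), g y := by
    rw [integral_const_mul, hcov]; ring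
  have hlhs : (∫ x in Ioi (0 : ℝ), (x * N' x + lam0 * (x * N x) + x * (B x * N x)))
      = (∫ x in Ioi (0 : ℝ), x * N' x) + lam0 * J + ∫ x in Ioi (0 : ℝ), x * (B x * N x) := by
    have h1 : IntegrableOn (fun x => lam0 * (x * N x)) (Ioi 0) := hxNint.const_mul lam0
    have h2 : IntegrableOn (fun x => x * N' x + lam0 * (x * N x)) (Ioi 0) := hxN'int.add h1
    rw [integral_add h2 hxBNint, integral_add hxN'int h1, integral_const_mul]
  have hmain : lam0 * J = I := by
    have : (∫ x in Ioi (0 : ℝ), x * N' x) + lam0 * J + (∫ x in Ioi (0 : ℝ), g x)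
        = ∫ x in Ioi (0 : ℝ), g x := by
      rw [← hlhs, hkey, hrhs]
    rw [hparts'] at this
    linarith
  have hJ0 : J ≠ 0 := by
    intro h
    rw [h, mul_zero] at hmain
    linarith
  field_simp
  linarith [hmain]
end
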